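/- Let R be a Γ-graded integral domain and ⋆ a homogeneous star operation on R. Then every maximal (e(⋆_f))_f-ideal M of R with M ∩ H ≠ ∅ is homogeneous, i.e., M = C(M). -/

import Mathlib

open FractionalIdeal
open scoped Classical

section Setup

variable {Γ : Type*} [AddCommMonoid Γ] [LinearOrder Γ] [IsOrderedCancelAddMonoid Γ] [DecidableEq Γ]
  {R : Type*} [CommRing R] [IsDomain R]
  (𝒜 : Γ → AddSubgroup R) [GradedRing 𝒜]
  (K : Type*) [Field K] [Algebra R K] [IsFractionRing R K]

/-- The integral ideal corresponding to a fractional ideal contained in `R`. -/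
def idealOf (J : FractionalIdeal (nonZeroDivisors R) K) : Ideal R :=
  (J : Submodule R K).comap (Algebra.linearMap R K)

/-- An integral ideal is homogeneous if it contains all homogeneous components of its elements. -/
def IsHomIdeal (I : Ideal R) : Prop := ∀ f ∈ I, ∀ γ : Γ, GradedRing.proj 𝒜 γ f ∈ I

/-- `C(I)`: the homogeneous ideal generated by the homogeneous components of elements of `I`. -/
def homC (I : Ideal R) : Ideal R :=
  Ideal.span {x | ∃ f ∈ I, ∃ γ : Γ, x = GradedRing.proj 𝒜 γ f}

/-- `C(J)` for a fractional ideal `J ⊆ R`, as a fractional ideal. -/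
def Cfrac (J : FractionalIdeal (nonZeroDivisors R) K) : FractionalIdeal (nonZeroDivisors R) K :=
  ↑(homC 𝒜 (idealOf K J))

/-- A fractional ideal is homogeneous if some nonzero homogeneous `s ∈ R` multiplies it into a
homogeneous integral ideal. -/
def IsHomFrac (A : FractionalIdeal (nonZeroDivisors R) K) : Prop :=
  ∃ s : R, s ≠ 0 ∧ SetLike.IsHomogeneousElem 𝒜 s ∧
    spanSingleton (nonZeroDivisors R) (algebraMap R K s) * A ≤ 1 ∧
    IsHomIdeal 𝒜 (idealOf K (spanSingleton (nonZeroDivisors R) (algebraMap R K s) * A))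

/-- A homogeneous element of the homogeneous quotient field, viewed inside `K`. -/
def IsHomElem (x : K) : Prop :=
  ∃ a b : R, SetLike.IsHomogeneousElem 𝒜 a ∧ SetLike.IsHomogeneousElem 𝒜 b ∧ b ≠ 0 ∧
    x * algebraMap R K b = algebraMap R K a

end Setup

/-- A homogeneous star operation on the graded domain `R`. -/
structure HomStarOp {Γ : Type*} [AddCommMonoid Γ] [LinearOrder Γ] [IsOrderedCancelAddMonoid Γ] [DecidableEq Γ]
    {R : Type*} [CommRing R] [IsDomain R] (𝒜 : Γ → AddSubgroup R) [GradedRing 𝒜]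
    (K : Type*) [Field K] [Algebra R K] [IsFractionRing R K] where
  toFun : FractionalIdeal (nonZeroDivisors R) K → FractionalIdeal (nonZeroDivisors R) K
  hom : ∀ A, A ≠ 0 → IsHomFrac 𝒜 K A → IsHomFrac 𝒜 K (toFun A)
  map_span : ∀ x : K, x ≠ 0 → IsHomElem 𝒜 K x →
    toFun (spanSingleton (nonZeroDivisors R) x) = spanSingleton (nonZeroDivisors R) x
  map_smul : ∀ x : K, x ≠ 0 → IsHomElem 𝒜 K x → ∀ A, A ≠ 0 → IsHomFrac 𝒜 K A →
    toFun (spanSingleton (nonZeroDivisors R) x * A) = spanSingleton (nonZeroDivisors R) x * toFun A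
  le_star : ∀ A, A ≠ 0 → IsHomFrac 𝒜 K A → A ≤ toFun A
  mono : ∀ A B, A ≠ 0 → B ≠ 0 → IsHomFrac 𝒜 K A → IsHomFrac 𝒜 K B → A ≤ B → toFun A ≤ toFun B
  idem : ∀ A, A ≠ 0 → IsHomFrac 𝒜 K A → toFun (toFun A) = toFun A

/-- A classical star operation on the domain `R`. -/
structure StarOp (R : Type*) [CommRing R] [IsDomain R]
    (K : Type*) [Field K] [Algebra R K] [IsFractionRing R K] where
  toFun : FractionalIdeal (nonZeroDivisors R) K → FractionalIdeal (nonZeroDivisors R) K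
  map_span : ∀ x : K, x ≠ 0 →
    toFun (spanSingleton (nonZeroDivisors R) x) = spanSingleton (nonZeroDivisors R) x
  map_smul : ∀ x : K, x ≠ 0 → ∀ A, A ≠ 0 →
    toFun (spanSingleton (nonZeroDivisors R) x * A) = spanSingleton (nonZeroDivisors R) x * toFun A
  le_star : ∀ A, A ≠ 0 → A ≤ toFun A
  mono : ∀ A B, A ≠ 0 → B ≠ 0 → A ≤ B → toFun A ≤ toFun B
  idem : ∀ A, A ≠ 0 → toFun (toFun A) = toFun A

section EStar

variable {Γ : Type*} [AddCommMonoid Γ] [LinearOrder Γ] [IsOrderedCancelAddMonoid Γ] [DecidableEq Γ]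
  {R : Type*} [CommRing R] [IsDomain R]
  (𝒜 : Γ → AddSubgroup R) [GradedRing 𝒜]
  (K : Type*) [Field K] [Algebra R K] [IsFractionRing R K]

/-- The submodule `⋂ { z⁻¹ (C(zA))^⋆ : 0 ≠ z ∈ (R : A) }`. -/
def eStarSub (s : HomStarOp 𝒜 K) (A : FractionalIdeal (nonZeroDivisors R) K) : Submodule R K :=
  ⨅ z ∈ {z : K | z ≠ 0 ∧ spanSingleton (nonZeroDivisors R) z * A ≤ 1},
    ↑(spanSingleton (nonZeroDivisors R) z⁻¹ *
      s.toFun (Cfrac 𝒜 K (spanSingleton (nonZeroDivisors R) z * A)))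

/-- The extension `e(⋆)` of a homogeneous star operation `⋆`,
`A^{e(⋆)} := ⋂ { z⁻¹ (C(zA))^⋆ : 0 ≠ z ∈ (R : A) }` (which is a fractional ideal whenever
`A` is a nonzero fractional ideal). -/
noncomputable def eStar (s : HomStarOp 𝒜 K) (A : FractionalIdeal (nonZeroDivisors R) K) :
    FractionalIdeal (nonZeroDivisors R) K :=
  if h : IsFractional (nonZeroDivisors R) (eStarSub 𝒜 K s A) then ⟨_, h⟩ else 0

end EStar


/-- `A^{★_f}` as a set: the union of `B^★` over finitely generated `B ⊆ A`. -/
def finTypeSet {R : Type*} [CommRing R] [IsDomain R]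
    (K : Type*) [Field K] [Algebra R K] [IsFractionRing R K]
    (t : FractionalIdeal (nonZeroDivisors R) K → FractionalIdeal (nonZeroDivisors R) K)
    (A : FractionalIdeal (nonZeroDivisors R) K) : Set K :=
  ⋃ B ∈ {B : FractionalIdeal (nonZeroDivisors R) K |
      B ≠ 0 ∧ B ≤ A ∧ (B : Submodule R K).FG}, {x : K | x ∈ t B}

/-- `A^{⋆_f}` as a set: the union of `B^⋆` over finitely generated homogeneous `B ⊆ A`. -/
def homFinTypeSet {Γ : Type*} [AddCommMonoid Γ] [LinearOrder Γ] [IsOrderedCancelAddMonoid Γ] [DecidableEq Γ]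
    {R : Type*} [CommRing R] [IsDomain R]
    (𝒜 : Γ → AddSubgroup R) [GradedRing 𝒜]
    (K : Type*) [Field K] [Algebra R K] [IsFractionRing R K]
    (t : FractionalIdeal (nonZeroDivisors R) K → FractionalIdeal (nonZeroDivisors R) K)
    (A : FractionalIdeal (nonZeroDivisors R) K) : Set K :=
  ⋃ B ∈ {B : FractionalIdeal (nonZeroDivisors R) K |
      B ≠ 0 ∧ B ≤ A ∧ IsHomFrac 𝒜 K B ∧ (B : Submodule R K).FG}, {x : K | x ∈ t B}

set_option linter.unusedSectionVars false
set_option maxHeartbeats 1000000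
section AuxGraded
variable {Γ : Type*} [AddCommMonoid Γ] [LinearOrder Γ] [IsOrderedCancelAddMonoid Γ] [DecidableEq Γ]
  {R : Type*} [CommRing R] [IsDomain R]
  (𝒜 : Γ → AddSubgroup R) [GradedRing 𝒜]

/-- support of an element -/
noncomputable def gsupp (x : R) : Finset Γ := DFinsupp.support (DirectSum.decompose 𝒜 x)

lemma proj_eq_zero_of_not_mem_gsupp {x : R} {γ : Γ} (h : γ ∉ gsupp 𝒜 x) :
    GradedRing.proj 𝒜 γ x = 0 := by
  rw [GradedRing.proj_apply]
  rw [gsupp, DFinsupp.notMem_support_iff] at h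
  rw [h]; rfl

lemma proj_ne_zero_of_mem_gsupp {x : R} {γ : Γ} (h : γ ∈ gsupp 𝒜 x) :
    GradedRing.proj 𝒜 γ x ≠ 0 := by
  rw [GradedRing.proj_apply]
  rw [gsupp, DFinsupp.mem_support_iff] at h
  exact fun hh => h (Subtype.ext hh)

lemma sum_proj (x : R) : ∑ γ ∈ gsupp 𝒜 x, GradedRing.proj 𝒜 γ x = x := by
  conv_rhs => rw [← DirectSum.sum_support_decompose 𝒜 x]
  exact Finset.sum_congr rfl fun γ _ => GradedRing.proj_apply 𝒜 γ x

lemma proj_homogeneous (γ : Γ) (x : R) : SetLike.IsHomogeneousElem 𝒜 (GradedRing.proj 𝒜 γ x) := by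
  rw [GradedRing.proj_apply]; exact ⟨γ, SetLike.coe_mem _⟩

lemma proj_mem (γ : Γ) (x : R) : GradedRing.proj 𝒜 γ x ∈ 𝒜 γ := by
  rw [GradedRing.proj_apply]; exact SetLike.coe_mem _

lemma proj_of_mem {x : R} {γ : Γ} (h : x ∈ 𝒜 γ) : GradedRing.proj 𝒜 γ x = x := by
  rw [GradedRing.proj_apply]; exact DirectSum.decompose_of_mem_same 𝒜 h

lemma proj_of_mem_ne {x : R} {γ η : Γ} (h : x ∈ 𝒜 γ) (hne : γ ≠ η) :
    GradedRing.proj 𝒜 η x = 0 := by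
  rw [GradedRing.proj_apply]; exact DirectSum.decompose_of_mem_ne 𝒜 h hne

/-- L2a -/
lemma proj_hom_mul {a : R} {d : Γ} (ha : a ∈ 𝒜 d) (x : R) (γ : Γ) :
    GradedRing.proj 𝒜 (d + γ) (a * x) = a * GradedRing.proj 𝒜 γ x := by
  induction x using DirectSum.Decomposition.inductionOn 𝒜 with
  | zero => simp
  | @homogeneous j m =>
    rcases eq_or_ne j γ with rfl | hne
    · rw [proj_of_mem 𝒜 (SetLike.mul_mem_graded ha m.2), proj_of_mem 𝒜 m.2]
    · rw [proj_of_mem_ne 𝒜 (SetLike.mul_mem_graded ha m.2) (by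
        intro hc; exact hne (by exact add_left_cancel hc)),
        proj_of_mem_ne 𝒜 m.2 hne, mul_zero]
  | add y z hy hz =>
    rw [mul_add, (GradedRing.proj 𝒜 (d + γ)).map_add, hy, hz,
      (GradedRing.proj 𝒜 γ).map_add, mul_add]

/-- L2b -/
lemma proj_hom_mul_ne {a : R} {d : Γ} (ha : a ∈ 𝒜 d) (x : R) (η : Γ)
    (h : ∀ γ : Γ, η ≠ d + γ) : GradedRing.proj 𝒜 η (a * x) = 0 := by
  induction x using DirectSum.Decomposition.inductionOn 𝒜 with
  | zero => simp
  | @homogeneous j m =>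
    exact proj_of_mem_ne 𝒜 (SetLike.mul_mem_graded ha m.2) (fun hc => h j hc.symm)
  | add y z hy hz =>
    rw [mul_add, (GradedRing.proj 𝒜 η).map_add, hy, hz, add_zero]

end AuxGraded

section AuxCI
variable {Γ : Type*} [AddCommMonoid Γ] [LinearOrder Γ] [IsOrderedCancelAddMonoid Γ] [DecidableEq Γ]
  {R : Type*} [CommRing R] [IsDomain R]
  (𝒜 : Γ → AddSubgroup R) [GradedRing 𝒜]

/-- ideal of components of a single element -/
def cI (x : R) : Ideal R := Ideal.span {y | ∃ γ : Γ, y = GradedRing.proj 𝒜 γ x}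

lemma proj_mem_cI (x : R) (γ : Γ) : GradedRing.proj 𝒜 γ x ∈ cI 𝒜 x :=
  Ideal.subset_span ⟨γ, rfl⟩

/-- sum of ideals is below T if each is -/
lemma sum_ideal_le {ι : Type*} {s : Finset ι} {f : ι → Ideal R} {T : Ideal R}
    (h : ∀ i ∈ s, f i ≤ T) : ∑ i ∈ s, f i ≤ T := by
  classical
  induction s using Finset.induction with
  | empty => simp
  | @insert a s ha ih =>
    rw [Finset.sum_insert ha, Submodule.add_eq_sup]
    exact sup_le (h a (Finset.mem_insert_self a s))
      (ih fun i hi => h i (Finset.mem_insert_of_mem hi))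

lemma self_mem_cI (x : R) : x ∈ cI 𝒜 x := by
  have h : (∑ γ ∈ gsupp 𝒜 x, GradedRing.proj 𝒜 γ x) ∈ cI 𝒜 x :=
    Ideal.sum_mem _ fun γ _ => proj_mem_cI 𝒜 x γ
  rwa [sum_proj] at h

lemma cI_homogeneous (x : R) : Ideal.IsHomogeneous 𝒜 (cI 𝒜 x) :=
  Ideal.homogeneous_span 𝒜 _ (by rintro y ⟨γ, rfl⟩; exact proj_homogeneous 𝒜 γ x)

/-- L6' : if all components of x lie in an ideal T, so do components of r * x -/
lemma proj_mul_mem_of (T : Ideal R) (r : R) {x : R} (hx : ∀ ν : Γ, GradedRing.proj 𝒜 ν x ∈ T)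
    (γ : Γ) : GradedRing.proj 𝒜 γ (r * x) ∈ T := by
  induction r using DirectSum.Decomposition.inductionOn 𝒜 with
  | zero => simp
  | @homogeneous d m =>
    by_cases h : ∃ ν : Γ, γ = d + ν
    · obtain ⟨ν, rfl⟩ := h
      rw [proj_hom_mul 𝒜 m.2]
      exact Ideal.mul_mem_left _ _ (hx ν)
    · rw [proj_hom_mul_ne 𝒜 m.2 x γ (fun ν hν => h ⟨ν, hν⟩)]
      exact T.zero_mem
  | add y z hy hz =>
    rw [add_mul, (GradedRing.proj 𝒜 γ).map_add]
    exact T.add_mem hy hz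

lemma proj_mul_mem (r x : R) (γ : Γ) : GradedRing.proj 𝒜 γ (r * x) ∈ cI 𝒜 x :=
  proj_mul_mem_of 𝒜 _ r (fun ν => proj_mem_cI 𝒜 x ν) γ

lemma cI_le_of (T : Ideal R) {x : R} (h : ∀ γ : Γ, GradedRing.proj 𝒜 γ x ∈ T) : cI 𝒜 x ≤ T :=
  Ideal.span_le.mpr (by rintro y ⟨γ, rfl⟩; exact h γ)

/-- components of a product with homogeneous factor -/
lemma cI_hom_mul_le {b : R} {e : Γ} (hb : b ∈ 𝒜 e) (x : R) :
    cI 𝒜 (b * x) ≤ Ideal.span {b} * cI 𝒜 x := by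
  refine cI_le_of 𝒜 _ fun γ => ?_
  by_cases h : ∃ ν : Γ, γ = e + ν
  · obtain ⟨ν, rfl⟩ := h
    rw [proj_hom_mul 𝒜 hb]
    exact Ideal.mul_mem_mul (Ideal.mem_span_singleton_self b) (proj_mem_cI 𝒜 x ν)
  · rw [proj_hom_mul_ne 𝒜 hb x γ (fun ν hν => h ⟨ν, hν⟩)]
    exact Submodule.zero_mem _

lemma cI_sub_le (x y : R) : cI 𝒜 (x - y) ≤ cI 𝒜 x + cI 𝒜 y := by
  refine cI_le_of 𝒜 _ fun γ => ?_
  have : GradedRing.proj 𝒜 γ (x - y) = GradedRing.proj 𝒜 γ x - GradedRing.proj 𝒜 γ y :=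
    map_sub _ _ _
  rw [this]
  exact sub_mem (Submodule.mem_sup_left (proj_mem_cI 𝒜 x γ))
    (Submodule.mem_sup_right (proj_mem_cI 𝒜 y γ))

lemma cI_eq_sum_span (x : R) :
    cI 𝒜 x = ∑ γ ∈ gsupp 𝒜 x, Ideal.span {GradedRing.proj 𝒜 γ x} := by
  apply le_antisymm
  · refine cI_le_of 𝒜 _ fun γ => ?_
    by_cases h : γ ∈ gsupp 𝒜 x
    · exact Finset.single_le_sum (f := fun γ => Ideal.span {GradedRing.proj 𝒜 γ x})
        (fun _ _ => bot_le) h (Ideal.mem_span_singleton_self _)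
    · rw [proj_eq_zero_of_not_mem_gsupp 𝒜 h]
      exact Submodule.zero_mem _
  · refine sum_ideal_le fun γ _ => ?_
    rw [Ideal.span_le, Set.singleton_subset_iff]
    exact proj_mem_cI 𝒜 x γ

lemma cI_fg (x : R) : (cI 𝒜 x).FG := by
  rw [cI_eq_sum_span]
  classical
  induction (gsupp 𝒜 x) using Finset.induction with
  | empty => rw [Finset.sum_empty]; exact Submodule.fg_bot
  | @insert a t h ih =>
    rw [Finset.sum_insert h, Submodule.add_eq_sup]
    exact Submodule.FG.sup (Submodule.fg_span_singleton _) ih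

lemma cI_zero : cI 𝒜 (0 : R) = ⊥ := by
  apply le_antisymm _ bot_le
  refine cI_le_of 𝒜 _ fun γ => ?_
  simp

end AuxCI

section AuxDM
variable {Γ : Type*} [AddCommMonoid Γ] [LinearOrder Γ] [IsOrderedCancelAddMonoid Γ] [DecidableEq Γ]
  {R : Type*} [CommRing R] [IsDomain R]
  (𝒜 : Γ → AddSubgroup R) [GradedRing 𝒜]

lemma mem_gsupp_iff {x : R} {γ : Γ} : γ ∈ gsupp 𝒜 x ↔ GradedRing.proj 𝒜 γ x ≠ 0 := by
  constructor
  · exact fun h => proj_ne_zero_of_mem_gsupp 𝒜 h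
  · intro h; by_contra hc; exact h (proj_eq_zero_of_not_mem_gsupp 𝒜 hc)

lemma gsupp_eq_empty {x : R} (h : gsupp 𝒜 x = ∅) : x = 0 := by
  have := sum_proj 𝒜 x
  rw [h, Finset.sum_empty] at this
  exact this.symm

lemma gsupp_sub_proj {w : R} {e : Γ} :
    gsupp 𝒜 (w - GradedRing.proj 𝒜 e w) = (gsupp 𝒜 w).erase e := by
  ext γ
  rw [Finset.mem_erase, mem_gsupp_iff, mem_gsupp_iff]
  have hb : GradedRing.proj 𝒜 e w ∈ 𝒜 e := proj_mem 𝒜 e w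
  rcases eq_or_ne γ e with rfl | hne
  · rw [map_sub, proj_of_mem 𝒜 hb, sub_self]
    simp
  · rw [map_sub, proj_of_mem_ne 𝒜 hb (Ne.symm hne), sub_zero]
    simp [hne]

/-- key identity for Dedekind–Mertens -/
lemma key_identity (f w : R) {e : Γ} (hemax : ∀ ν ∈ gsupp 𝒜 w, ν ≤ e) {i : Γ}
    (hi : i ∈ gsupp 𝒜 f) :
    GradedRing.proj 𝒜 i f * GradedRing.proj 𝒜 e w ∈
      cI 𝒜 (f * w) + ∑ j ∈ (gsupp 𝒜 f).filter (fun x => i < x),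
        Ideal.span {GradedRing.proj 𝒜 j f} * cI 𝒜 (w - GradedRing.proj 𝒜 e w) := by
  set b := GradedRing.proj 𝒜 e w with hbdef
  set T := ∑ j ∈ (gsupp 𝒜 f).filter (fun x => i < x),
      Ideal.span {GradedRing.proj 𝒜 j f} * cI 𝒜 (w - b) with hT
  have hb : b ∈ 𝒜 e := proj_mem 𝒜 e w
  have hfw : f * w = ∑ i' ∈ gsupp 𝒜 f, GradedRing.proj 𝒜 i' f * w := by
    rw [← Finset.sum_mul, sum_proj]
  have hproj : GradedRing.proj 𝒜 (i + e) (f * w) =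
      ∑ i' ∈ gsupp 𝒜 f, GradedRing.proj 𝒜 (i + e) (GradedRing.proj 𝒜 i' f * w) := by
    rw [hfw, map_sum]
  have hterm_i : GradedRing.proj 𝒜 (i + e) (GradedRing.proj 𝒜 i f * w)
      = GradedRing.proj 𝒜 i f * b := proj_hom_mul 𝒜 (proj_mem 𝒜 i f) w e
  have hother : ∀ i' ∈ gsupp 𝒜 f, i' ≠ i →
      GradedRing.proj 𝒜 (i + e) (GradedRing.proj 𝒜 i' f * w) ∈ T := by
    intro i' hi' hne
    by_cases hex : ∃ ν : Γ, i + e = i' + ν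
    · obtain ⟨ν, hν⟩ := hex
      rw [hν, proj_hom_mul 𝒜 (proj_mem 𝒜 i' f) w ν]
      have hνe : ν ≠ e := by
        intro hc; subst hc
        exact hne (add_right_cancel hν.symm)
      rcases lt_or_ge i i' with hlt | hle
      · have hwν : GradedRing.proj 𝒜 ν w = GradedRing.proj 𝒜 ν (w - b) := by
          rw [map_sub, proj_of_mem_ne 𝒜 hb (Ne.symm hνe), sub_zero]
        rw [hwν]
        have : Ideal.span {GradedRing.proj 𝒜 i' f} * cI 𝒜 (w - b) ≤ T := by
          rw [hT]
          exact Finset.single_le_sum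
            (f := fun j => Ideal.span {GradedRing.proj 𝒜 j f} * cI 𝒜 (w - b))
            (fun _ _ => bot_le) (Finset.mem_filter.mpr ⟨hi', hlt⟩)
        exact this (Ideal.mul_mem_mul (Ideal.mem_span_singleton_self _)
          (proj_mem_cI 𝒜 _ ν))
      · have hlt' : i' < i := lt_of_le_of_ne hle hne
        have heν : e < ν := by
          have : i' + e < i' + ν := by
            calc i' + e < i + e := by exact add_lt_add_of_lt_of_le hlt' le_rfl
              _ = i' + ν := hν
          exact lt_of_add_lt_add_left this
        have : ν ∉ gsupp 𝒜 w := fun hc => absurd (hemax ν hc) (not_le.mpr heν)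
        rw [proj_eq_zero_of_not_mem_gsupp 𝒜 this, mul_zero]
        exact Submodule.zero_mem _
    · rw [proj_hom_mul_ne 𝒜 (proj_mem 𝒜 i' f) w _ (fun ν hν => hex ⟨ν, hν⟩)]
      exact Submodule.zero_mem _
  have hsplit : GradedRing.proj 𝒜 i f * b =
      GradedRing.proj 𝒜 (i + e) (f * w) -
        ∑ i' ∈ (gsupp 𝒜 f).erase i, GradedRing.proj 𝒜 (i + e) (GradedRing.proj 𝒜 i' f * w) := by
    rw [hproj, ← Finset.add_sum_erase _ _ hi, hterm_i]
    ring
  rw [hsplit]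
  refine sub_mem (Submodule.mem_sup_left (proj_mem_cI 𝒜 _ _)) (Submodule.sum_mem _ ?_)
  intro i' hi'
  rw [Finset.mem_erase] at hi'
  exact Submodule.mem_sup_right (hother i' hi'.2 hi'.1)

end AuxDM

section AuxDM2
variable {Γ : Type*} [AddCommMonoid Γ] [LinearOrder Γ] [IsOrderedCancelAddMonoid Γ] [DecidableEq Γ]
  {R : Type*} [CommRing R] [IsDomain R]
  (𝒜 : Γ → AddSubgroup R) [GradedRing 𝒜]

lemma span_hom_mul_cI_le {w : R} {e : Γ} (hw : w ∈ 𝒜 e) (f : R) :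
    Ideal.span {w} * cI 𝒜 f ≤ cI 𝒜 (f * w) := by
  rw [Ideal.span_singleton_mul_le_iff]
  intro z hz
  induction hz using Submodule.span_induction with
  | mem y hy =>
    obtain ⟨i, rfl⟩ := hy
    rw [mul_comm f w, ← proj_hom_mul 𝒜 hw f i]
    exact proj_mem_cI 𝒜 _ _
  | zero => rw [mul_zero]; exact Submodule.zero_mem _
  | add y z _ _ hy hz => rw [mul_add]; exact Submodule.add_mem _ hy hz
  | smul r y _ hy =>
    have heq : w * (r • y) = r • (w * y) := by
      rw [smul_eq_mul, smul_eq_mul]; ring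
    rw [heq]
    exact Submodule.smul_mem _ r hy

/-- Graded Dedekind–Mertens (hard half). -/
theorem dedekind_mertens (f : R) : ∀ m : ℕ, ∀ w : R, (gsupp 𝒜 w).card ≤ m + 1 →
    cI 𝒜 f ^ (m + 1) * cI 𝒜 w ≤ cI 𝒜 f ^ m * cI 𝒜 (f * w) := by
  intro m
  induction m with
  | zero =>
    intro w hcard
    rcases eq_or_ne w 0 with rfl | hw
    · rw [cI_zero, Ideal.mul_bot]
      exact bot_le
    · have hne : (gsupp 𝒜 w).Nonempty := by
        rcases Finset.eq_empty_or_nonempty (gsupp 𝒜 w) with h | h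
        · exact absurd (gsupp_eq_empty 𝒜 h) hw
        · exact h
      obtain ⟨e, he⟩ := Finset.card_eq_one.mp (le_antisymm hcard hne.card_pos)
      have hwe : w ∈ 𝒜 e := by
        have : w = GradedRing.proj 𝒜 e w := by
          conv_lhs => rw [← sum_proj 𝒜 w]
          rw [he, Finset.sum_singleton]
        rw [this]; exact proj_mem 𝒜 e w
      have h1 : cI 𝒜 w ≤ Ideal.span {w} := by
        refine cI_le_of 𝒜 _ fun γ => ?_
        rcases eq_or_ne γ e with rfl | hγ
        · rw [proj_of_mem 𝒜 hwe]; exact Ideal.mem_span_singleton_self w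
        · rw [proj_of_mem_ne 𝒜 hwe (Ne.symm hγ)]; exact Submodule.zero_mem _
      calc cI 𝒜 f ^ 1 * cI 𝒜 w ≤ cI 𝒜 f ^ 1 * Ideal.span {w} := Ideal.mul_mono_right h1
        _ = Ideal.span {w} * cI 𝒜 f := by rw [pow_one, mul_comm]
        _ ≤ cI 𝒜 (f * w) := span_hom_mul_cI_le 𝒜 hwe f
        _ = cI 𝒜 f ^ 0 * cI 𝒜 (f * w) := by rw [pow_zero, one_mul]
  | succ m ih =>
    intro w hcard
    by_cases hle : (gsupp 𝒜 w).card ≤ m + 1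
    · calc cI 𝒜 f ^ (m + 2) * cI 𝒜 w = cI 𝒜 f * (cI 𝒜 f ^ (m + 1) * cI 𝒜 w) := by ring
        _ ≤ cI 𝒜 f * (cI 𝒜 f ^ m * cI 𝒜 (f * w)) := Ideal.mul_mono_right (ih w hle)
        _ = cI 𝒜 f ^ (m + 1) * cI 𝒜 (f * w) := by ring
    · have hne : (gsupp 𝒜 w).Nonempty := by
        rcases Finset.eq_empty_or_nonempty (gsupp 𝒜 w) with h | h
        · rw [h] at hle; simp at hle
        · exact h
      set e := (gsupp 𝒜 w).max' hne with hedef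
      have he : e ∈ gsupp 𝒜 w := Finset.max'_mem _ hne
      have hemax : ∀ ν ∈ gsupp 𝒜 w, ν ≤ e := fun ν hν => Finset.le_max' _ ν hν
      set b := GradedRing.proj 𝒜 e w with hbdef
      have hb : b ∈ 𝒜 e := proj_mem 𝒜 e w
      set w' := w - b with hw'def
      have hsupp' : gsupp 𝒜 w' = (gsupp 𝒜 w).erase e := gsupp_sub_proj 𝒜
      have hcard' : (gsupp 𝒜 w').card ≤ m + 1 := by
        rw [hsupp', Finset.card_erase_of_mem he]
        omega
      have hcw : cI 𝒜 w ≤ Ideal.span {b} + cI 𝒜 w' := by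
        refine cI_le_of 𝒜 _ fun γ => ?_
        rcases eq_or_ne γ e with rfl | hγ
        · exact Submodule.mem_sup_left (Ideal.mem_span_singleton_self b)
        · have : GradedRing.proj 𝒜 γ w = GradedRing.proj 𝒜 γ w' := by
            rw [hw'def, map_sub, proj_of_mem_ne 𝒜 hb (Ne.symm hγ), sub_zero]
          rw [this]
          exact Submodule.mem_sup_right (proj_mem_cI 𝒜 w' γ)
      have hfb : cI 𝒜 (f * b) ≤ Ideal.span {b} * cI 𝒜 f := by
        rw [mul_comm f b]
        exact cI_hom_mul_le 𝒜 hb f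
      have hfw' : cI 𝒜 (f * w') ≤ cI 𝒜 (f * w) + Ideal.span {b} * cI 𝒜 f := by
        have : f * w' = f * w - f * b := by rw [hw'def, mul_sub]
        rw [this]
        exact le_trans (cI_sub_le 𝒜 _ _) (add_le_add le_rfl hfb)
      -- inner descending induction
      have inner : ∀ t : ℕ, ∀ i ∈ gsupp 𝒜 f, ((gsupp 𝒜 f).filter (fun x => i < x)).card < t →
          Ideal.span {GradedRing.proj 𝒜 i f * b} * cI 𝒜 f ^ (m + 1) ≤
            cI 𝒜 f ^ (m + 1) * cI 𝒜 (f * w) := by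
        intro t
        induction t with
        | zero => intro i _ h; exact absurd h (Nat.not_lt_zero _)
        | succ t iht =>
          intro i hi hcardi
          have hcardi2 : (Finset.filter (fun x => i < x) (gsupp 𝒜 f)).card < t + 1 := hcardi
          clear hcardi
          have hkey := key_identity 𝒜 f w hemax hi
          have h1 : Ideal.span {GradedRing.proj 𝒜 i f * b} ≤
              cI 𝒜 (f * w) + ∑ j ∈ (gsupp 𝒜 f).filter (fun x => i < x),
                Ideal.span {GradedRing.proj 𝒜 j f} * cI 𝒜 w' := by
            rw [Ideal.span_le, Set.singleton_subset_iff]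
            exact hkey
          calc Ideal.span {GradedRing.proj 𝒜 i f * b} * cI 𝒜 f ^ (m + 1)
              ≤ (cI 𝒜 (f * w) + ∑ j ∈ (gsupp 𝒜 f).filter (fun x => i < x),
                  Ideal.span {GradedRing.proj 𝒜 j f} * cI 𝒜 w') * cI 𝒜 f ^ (m + 1) :=
                Ideal.mul_mono_left h1
            _ = cI 𝒜 (f * w) * cI 𝒜 f ^ (m + 1) +
                ∑ j ∈ (gsupp 𝒜 f).filter (fun x => i < x),
                  Ideal.span {GradedRing.proj 𝒜 j f} * cI 𝒜 w' * cI 𝒜 f ^ (m + 1) := by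
                rw [add_mul, Finset.sum_mul]
            _ ≤ cI 𝒜 f ^ (m + 1) * cI 𝒜 (f * w) := by
                rw [Submodule.add_eq_sup, sup_le_iff]
                constructor
                · rw [mul_comm]
                · refine sum_ideal_le fun j hj => ?_
                  rw [Finset.mem_filter] at hj
                  obtain ⟨hjf, hij⟩ := hj
                  have hjcard : ((gsupp 𝒜 f).filter (fun x => j < x)).card < t := by
                    have hsub : (gsupp 𝒜 f).filter (fun x => j < x) ⊆
                        ((gsupp 𝒜 f).filter (fun x => i < x)).erase j := by
                      intro ν hν
                      rw [Finset.mem_filter] at hν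
                      rw [Finset.mem_erase, Finset.mem_filter]
                      exact ⟨ne_of_gt hν.2, hν.1, lt_trans hij hν.2⟩
                    have h2 := Finset.card_le_card hsub
                    rw [Finset.card_erase_of_mem (Finset.mem_filter.mpr ⟨hjf, hij⟩)] at h2
                    have h3 : 0 < ((gsupp 𝒜 f).filter (fun x => i < x)).card :=
                      Finset.card_pos.mpr ⟨j, Finset.mem_filter.mpr ⟨hjf, hij⟩⟩
                    have hl : (Finset.filter (LT.lt i) (gsupp 𝒜 f)).card =
                        (Finset.filter (fun x => i < x) (gsupp 𝒜 f)).card := rfl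
                    have hl2 : (Finset.filter (LT.lt j) (gsupp 𝒜 f)).card =
                        (Finset.filter (fun x => j < x) (gsupp 𝒜 f)).card := rfl
                    omega
                  have hstep : cI 𝒜 w' * cI 𝒜 f ^ (m + 1) ≤
                      cI 𝒜 f ^ m * cI 𝒜 (f * w) + Ideal.span {b} * cI 𝒜 f ^ (m + 1) := by
                    calc cI 𝒜 w' * cI 𝒜 f ^ (m + 1) = cI 𝒜 f ^ (m + 1) * cI 𝒜 w' := by
                          rw [mul_comm]
                      _ ≤ cI 𝒜 f ^ m * cI 𝒜 (f * w') := ih w' hcard'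
                      _ ≤ cI 𝒜 f ^ m * (cI 𝒜 (f * w) + Ideal.span {b} * cI 𝒜 f) :=
                          Ideal.mul_mono_right hfw'
                      _ = cI 𝒜 f ^ m * cI 𝒜 (f * w) + Ideal.span {b} * cI 𝒜 f ^ (m + 1) := by
                          ring
                  calc Ideal.span {GradedRing.proj 𝒜 j f} * cI 𝒜 w' * cI 𝒜 f ^ (m + 1)
                      = Ideal.span {GradedRing.proj 𝒜 j f} * (cI 𝒜 w' * cI 𝒜 f ^ (m + 1)) := by
                        ring
                    _ ≤ Ideal.span {GradedRing.proj 𝒜 j f} *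
                        (cI 𝒜 f ^ m * cI 𝒜 (f * w) + Ideal.span {b} * cI 𝒜 f ^ (m + 1)) :=
                        Ideal.mul_mono_right hstep
                    _ = Ideal.span {GradedRing.proj 𝒜 j f} * cI 𝒜 f ^ m * cI 𝒜 (f * w) +
                        (Ideal.span {GradedRing.proj 𝒜 j f} * Ideal.span {b}) *
                          cI 𝒜 f ^ (m + 1) := by ring
                    _ ≤ cI 𝒜 f ^ (m + 1) * cI 𝒜 (f * w) := by
                        rw [Submodule.add_eq_sup, sup_le_iff]
                        constructor
                        · have : Ideal.span {GradedRing.proj 𝒜 j f} ≤ cI 𝒜 f := by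
                            rw [Ideal.span_le, Set.singleton_subset_iff]
                            exact proj_mem_cI 𝒜 f j
                          calc Ideal.span {GradedRing.proj 𝒜 j f} * cI 𝒜 f ^ m * cI 𝒜 (f * w)
                              ≤ cI 𝒜 f * cI 𝒜 f ^ m * cI 𝒜 (f * w) :=
                                Ideal.mul_mono_left (Ideal.mul_mono_left this)
                            _ = cI 𝒜 f ^ (m + 1) * cI 𝒜 (f * w) := by ring
                        · rw [Ideal.span_singleton_mul_span_singleton]
                          exact iht j hjf hjcard
      -- part (ii)
      have part2 : Ideal.span {b} * cI 𝒜 f ^ (m + 2) ≤ cI 𝒜 f ^ (m + 1) * cI 𝒜 (f * w) := by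
        have hcf : cI 𝒜 f = ∑ i ∈ gsupp 𝒜 f, Ideal.span {GradedRing.proj 𝒜 i f} :=
          cI_eq_sum_span 𝒜 f
        calc Ideal.span {b} * cI 𝒜 f ^ (m + 2)
            = cI 𝒜 f * (Ideal.span {b} * cI 𝒜 f ^ (m + 1)) := by ring
          _ = (∑ i ∈ gsupp 𝒜 f, Ideal.span {GradedRing.proj 𝒜 i f}) *
              (Ideal.span {b} * cI 𝒜 f ^ (m + 1)) := by rw [← hcf]
          _ = ∑ i ∈ gsupp 𝒜 f, Ideal.span {GradedRing.proj 𝒜 i f} *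
              (Ideal.span {b} * cI 𝒜 f ^ (m + 1)) := by rw [Finset.sum_mul]
          _ ≤ cI 𝒜 f ^ (m + 1) * cI 𝒜 (f * w) := by
            refine sum_ideal_le fun i hi => ?_
            calc Ideal.span {GradedRing.proj 𝒜 i f} * (Ideal.span {b} * cI 𝒜 f ^ (m + 1))
                = (Ideal.span {GradedRing.proj 𝒜 i f} * Ideal.span {b}) * cI 𝒜 f ^ (m + 1) := by
                  ring
              _ = Ideal.span {GradedRing.proj 𝒜 i f * b} * cI 𝒜 f ^ (m + 1) := by
                  rw [Ideal.span_singleton_mul_span_singleton]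
              _ ≤ cI 𝒜 f ^ (m + 1) * cI 𝒜 (f * w) :=
                  inner (((gsupp 𝒜 f).filter (fun x => i < x)).card + 1) i hi (Nat.lt_succ_self _)
      -- conclude
      calc cI 𝒜 f ^ (m + 2) * cI 𝒜 w
          ≤ cI 𝒜 f ^ (m + 2) * (Ideal.span {b} + cI 𝒜 w') := Ideal.mul_mono_right hcw
        _ = Ideal.span {b} * cI 𝒜 f ^ (m + 2) + cI 𝒜 f * (cI 𝒜 f ^ (m + 1) * cI 𝒜 w') := by
            ring
        _ ≤ cI 𝒜 f ^ (m + 1) * cI 𝒜 (f * w) + cI 𝒜 f * (cI 𝒜 f ^ m * cI 𝒜 (f * w')) := by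
            rw [Submodule.add_eq_sup, Submodule.add_eq_sup, sup_le_iff]
            exact ⟨le_sup_of_le_left part2,
              le_sup_of_le_right (Ideal.mul_mono_right (ih w' hcard'))⟩
        _ = cI 𝒜 f ^ (m + 1) * cI 𝒜 (f * w) + cI 𝒜 f ^ (m + 1) * cI 𝒜 (f * w') := by ring
        _ ≤ cI 𝒜 f ^ (m + 1) * cI 𝒜 (f * w) := by
            rw [Submodule.add_eq_sup, sup_le_iff]
            refine ⟨le_rfl, ?_⟩
            calc cI 𝒜 f ^ (m + 1) * cI 𝒜 (f * w')
                ≤ cI 𝒜 f ^ (m + 1) * (cI 𝒜 (f * w) + Ideal.span {b} * cI 𝒜 f) :=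
                  Ideal.mul_mono_right hfw'
              _ = cI 𝒜 f ^ (m + 1) * cI 𝒜 (f * w) + Ideal.span {b} * cI 𝒜 f ^ (m + 2) := by
                  rw [mul_add]; ring_nf
              _ ≤ cI 𝒜 f ^ (m + 1) * cI 𝒜 (f * w) := by
                  rw [Submodule.add_eq_sup, sup_le_iff]
                  exact ⟨le_rfl, part2⟩

end AuxDM2

section AuxPigeon
variable {R : Type*} [CommRing R] [IsDomain R]

lemma sum_ideal_le' {ι : Type*} {s : Finset ι} {f : ι → Ideal R} {T : Ideal R}
    (h : ∀ i ∈ s, f i ≤ T) : ∑ i ∈ s, f i ≤ T := by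
  classical
  induction s using Finset.induction with
  | empty => simp
  | @insert a s ha ih =>
    rw [Finset.sum_insert ha, Submodule.add_eq_sup]
    exact sup_le (h a (Finset.mem_insert_self a s))
      (ih fun i hi => h i (Finset.mem_insert_of_mem hi))

lemma ideal_add_pow_le (A B : Ideal R) (p q : ℕ) :
    (A + B) ^ (p + q + 1) ≤ A ^ (p + 1) + B ^ (q + 1) := by
  rw [add_pow]
  refine sum_ideal_le' fun k hk => ?_
  by_cases h : p + 1 ≤ k
  · refine le_trans ?_ (le_sup_left : A ^ (p+1) ≤ _)
    calc A ^ k * B ^ (p + q + 1 - k) * ↑(Nat.choose (p+q+1) k)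
        ≤ A ^ k * B ^ (p + q + 1 - k) := Ideal.mul_le_left
      _ ≤ A ^ k := Ideal.mul_le_left
      _ ≤ A ^ (p + 1) := Ideal.pow_le_pow_right h
  · rw [Finset.mem_range] at hk
    have h2 : q + 1 ≤ p + q + 1 - k := by omega
    refine le_trans ?_ (le_sup_right : B ^ (q+1) ≤ _)
    calc A ^ k * B ^ (p + q + 1 - k) * ↑(Nat.choose (p+q+1) k)
        ≤ A ^ k * B ^ (p + q + 1 - k) := Ideal.mul_le_left
      _ ≤ B ^ (p + q + 1 - k) := Ideal.mul_le_right
      _ ≤ B ^ (q + 1) := Ideal.pow_le_pow_right h2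

lemma ideal_sum_pow_le {ι : Type*} (s : Finset ι) (C : ι → Ideal R) (k : ℕ) :
    (∑ i ∈ s, C i) ^ (s.card * k + 1) ≤ ∑ i ∈ s, C i ^ (k + 1) := by
  classical
  induction s using Finset.induction with
  | empty => simp
  | @insert a s ha ih =>
    rw [Finset.sum_insert ha, Finset.card_insert_of_notMem ha, Finset.sum_insert ha]
    have hexp : (s.card + 1) * k + 1 = k + s.card * k + 1 := by ring
    rw [hexp]
    calc (C a + ∑ i ∈ s, C i) ^ (k + s.card * k + 1)
        ≤ C a ^ (k + 1) + (∑ i ∈ s, C i) ^ (s.card * k + 1) :=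
          ideal_add_pow_le _ _ k (s.card * k)
      _ ≤ C a ^ (k + 1) + ∑ i ∈ s, C i ^ (k + 1) := by
          rw [Submodule.add_eq_sup, Submodule.add_eq_sup, sup_le_iff]
          exact ⟨le_sup_left, le_sup_of_le_right ih⟩

end AuxPigeon

section AuxHomC
variable {Γ : Type*} [AddCommMonoid Γ] [LinearOrder Γ] [IsOrderedCancelAddMonoid Γ] [DecidableEq Γ]
  {R : Type*} [CommRing R] [IsDomain R]
  (𝒜 : Γ → AddSubgroup R) [GradedRing 𝒜]

lemma le_homC (I : Ideal R) : I ≤ homC 𝒜 I := by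
  intro f hf
  have h : (∑ γ ∈ gsupp 𝒜 f, GradedRing.proj 𝒜 γ f) ∈ homC 𝒜 I :=
    Ideal.sum_mem _ fun γ _ => Ideal.subset_span ⟨f, hf, γ, rfl⟩
  rwa [sum_proj] at h

lemma homC_mono {I J : Ideal R} (h : I ≤ J) : homC 𝒜 I ≤ homC 𝒜 J :=
  Ideal.span_mono (by rintro x ⟨f, hf, γ, rfl⟩; exact ⟨f, h hf, γ, rfl⟩)

lemma homC_homogeneous (I : Ideal R) : Ideal.IsHomogeneous 𝒜 (homC 𝒜 I) :=
  Ideal.homogeneous_span 𝒜 _ (by rintro y ⟨f, hf, γ, rfl⟩; exact proj_homogeneous 𝒜 γ f)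

lemma isHomIdeal_iff {I : Ideal R} : IsHomIdeal 𝒜 I ↔ Ideal.IsHomogeneous 𝒜 I := by
  constructor
  · intro h i r hr
    have := h r hr i
    rwa [GradedRing.proj_apply] at this
  · intro h r hr γ
    rw [GradedRing.proj_apply]
    exact h γ hr

lemma homC_le_of_homogeneous {I : Ideal R} (h : Ideal.IsHomogeneous 𝒜 I) : homC 𝒜 I ≤ I := by
  rw [homC, Ideal.span_le]
  rintro x ⟨f, hf, γ, rfl⟩
  rw [GradedRing.proj_apply]
  exact h γ hf

lemma cI_le_homC {I : Ideal R} {f : R} (hf : f ∈ I) : cI 𝒜 f ≤ homC 𝒜 I :=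
  Ideal.span_le.mpr (by rintro x ⟨γ, rfl⟩; exact Ideal.subset_span ⟨f, hf, γ, rfl⟩)

lemma homC_span_finset (s : Finset R) :
    homC 𝒜 (Ideal.span (↑s : Set R)) = ∑ f ∈ s, cI 𝒜 f := by
  apply le_antisymm
  · have key : ∀ f ∈ Ideal.span (↑s : Set R), ∀ γ : Γ,
        GradedRing.proj 𝒜 γ f ∈ ∑ f ∈ s, cI 𝒜 f := by
      intro f hf
      induction hf using Submodule.span_induction with
      | mem y hy =>
        intro γ
        refine Finset.single_le_sum (f := fun f => cI 𝒜 f) (fun _ _ => bot_le) hy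
          (proj_mem_cI 𝒜 y γ)
      | zero => intro γ; simp
      | add y z _ _ hy hz =>
        intro γ
        rw [(GradedRing.proj 𝒜 γ).map_add]
        exact Submodule.add_mem _ (hy γ) (hz γ)
      | smul r y _ hy =>
        intro γ
        rw [smul_eq_mul]
        exact proj_mul_mem_of 𝒜 _ r hy γ
    rw [homC, Ideal.span_le]
    rintro x ⟨f, hf, γ, rfl⟩
    exact key f hf γ
  · exact sum_ideal_le' fun f hf => cI_le_homC 𝒜 (Ideal.subset_span hf)

lemma homC_fg {I : Ideal R} (h : I.FG) : (homC 𝒜 I).FG := by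
  obtain ⟨s, rfl⟩ := h
  rw [homC_span_finset]
  classical
  induction s using Finset.induction with
  | empty => rw [Finset.sum_empty]; exact Submodule.fg_bot
  | @insert a t ha ih =>
    rw [Finset.sum_insert ha, Submodule.add_eq_sup]
    exact Submodule.FG.sup (cI_fg 𝒜 a) ih

lemma homC_ne_bot {I : Ideal R} (h : I ≠ ⊥) : homC 𝒜 I ≠ ⊥ := by
  intro hc
  exact h (le_antisymm (le_trans (le_homC 𝒜 I) hc.le) bot_le)

lemma exists_fg_homC {I : Ideal R} {x : R} (hx : x ∈ homC 𝒜 I) :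
    ∃ J : Ideal R, J ≤ I ∧ J.FG ∧ x ∈ homC 𝒜 J := by
  induction hx using Submodule.span_induction with
  | mem y hy =>
    obtain ⟨f, hf, γ, rfl⟩ := hy
    exact ⟨Ideal.span {f}, by rwa [Ideal.span_le, Set.singleton_subset_iff],
      Submodule.fg_span_singleton f,
      Ideal.subset_span ⟨f, Ideal.mem_span_singleton_self f, γ, rfl⟩⟩
  | zero => exact ⟨⊥, bot_le, Submodule.fg_bot, Submodule.zero_mem _⟩
  | add y z _ _ hy hz =>
    obtain ⟨Jy, hJy, hfgy, hmy⟩ := hy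
    obtain ⟨Jz, hJz, hfgz, hmz⟩ := hz
    exact ⟨Jy ⊔ Jz, sup_le hJy hJz, Submodule.FG.sup hfgy hfgz,
      Submodule.add_mem _ (homC_mono 𝒜 le_sup_left hmy) (homC_mono 𝒜 le_sup_right hmz)⟩
  | smul r y _ hy =>
    obtain ⟨Jy, hJy, hfgy, hmy⟩ := hy
    exact ⟨Jy, hJy, hfgy, Submodule.smul_mem _ r hmy⟩

end AuxHomC

section AuxFrac
variable {Γ : Type*} [AddCommMonoid Γ] [LinearOrder Γ] [IsOrderedCancelAddMonoid Γ] [DecidableEq Γ]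
  {R : Type*} [CommRing R] [IsDomain R]
  (𝒜 : Γ → AddSubgroup R) [GradedRing 𝒜]
  (K : Type*) [Field K] [Algebra R K] [IsFractionRing R K]

lemma algMap_ne_zero {r : R} (h : r ≠ 0) : algebraMap R K r ≠ 0 := by
  intro hc
  exact h (IsFractionRing.injective R K (by rw [hc, _root_.map_zero]))

lemma hom_one : SetLike.IsHomogeneousElem 𝒜 (1 : R) := ⟨0, SetLike.one_mem_graded _⟩

lemma hom_mul {a b : R} (ha : SetLike.IsHomogeneousElem 𝒜 a) (hb : SetLike.IsHomogeneousElem 𝒜 b) :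
    SetLike.IsHomogeneousElem 𝒜 (a * b) := by
  obtain ⟨i, hi⟩ := ha; obtain ⟨j, hj⟩ := hb
  exact ⟨i + j, SetLike.mul_mem_graded hi hj⟩

lemma inv_mul_mem {τ x : K} (hτ : τ ≠ 0) {F : FractionalIdeal (nonZeroDivisors R) K}
    (hx : x ∈ spanSingleton (nonZeroDivisors R) τ * F) : τ⁻¹ * x ∈ F := by
  rw [← FractionalIdeal.mem_coe, FractionalIdeal.coe_mul,
    FractionalIdeal.coe_spanSingleton] at hx
  refine Submodule.mul_induction_on hx ?_ ?_
  · intro m hm n hn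
    obtain ⟨c, rfl⟩ := Submodule.mem_span_singleton.mp hm
    have heq : τ⁻¹ * (c • τ * n) = c • n := by
      rw [smul_mul_assoc, mul_smul_comm, ← mul_assoc, inv_mul_cancel₀ hτ, one_mul]
    rw [heq]
    exact Submodule.smul_mem _ c hn
  · intro a b ha hb
    rw [mul_add]
    exact Submodule.add_mem _ ha hb

lemma mul_mem_span_mul {τ y : K} {F : FractionalIdeal (nonZeroDivisors R) K} (hy : y ∈ F) :
    τ * y ∈ spanSingleton (nonZeroDivisors R) τ * F :=
  FractionalIdeal.mul_mem_mul
    ((FractionalIdeal.mem_spanSingleton _).mpr ⟨1, one_smul _ _⟩) hy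

lemma mem_idealOf_iff {F : FractionalIdeal (nonZeroDivisors R) K} {r : R} :
    r ∈ idealOf K F ↔ algebraMap R K r ∈ F := by
  rw [idealOf, Submodule.mem_comap, Algebra.linearMap_apply, FractionalIdeal.mem_coe]

lemma coeIdeal_idealOf {F : FractionalIdeal (nonZeroDivisors R) K} (hF : F ≤ 1) :
    (↑(idealOf K F) : FractionalIdeal (nonZeroDivisors R) K) = F := by
  apply le_antisymm
  · intro x hx
    obtain ⟨r, hr, rfl⟩ := (FractionalIdeal.mem_coeIdeal _).mp hx
    exact (mem_idealOf_iff K).mp hr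
  · intro x hx
    obtain ⟨r, rfl⟩ := (FractionalIdeal.mem_one_iff _).mp (hF hx)
    exact (FractionalIdeal.mem_coeIdeal _).mpr ⟨r, (mem_idealOf_iff K).mpr hx, rfl⟩

lemma idealOf_coeIdeal (I : Ideal R) : idealOf K (↑I : FractionalIdeal (nonZeroDivisors R) K) = I := by
  ext r
  rw [mem_idealOf_iff, FractionalIdeal.mem_coeIdeal]
  constructor
  · rintro ⟨r', hr', he⟩
    rwa [← IsFractionRing.injective R K he]
  · exact fun h => ⟨r, h, rfl⟩

lemma idealOf_spanSingleton (v : R) :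
    idealOf K (spanSingleton (nonZeroDivisors R) (algebraMap R K v)) = Ideal.span {v} := by
  ext r
  rw [mem_idealOf_iff, FractionalIdeal.mem_spanSingleton, Ideal.mem_span_singleton']
  constructor
  · rintro ⟨c, hc⟩
    refine ⟨c, IsFractionRing.injective R K ?_⟩
    rw [_root_.map_mul, ← Algebra.smul_def]
    exact hc
  · rintro ⟨c, rfl⟩
    exact ⟨c, by rw [Algebra.smul_def, ← _root_.map_mul]⟩

lemma frac_ne_zero_of_mem {F : FractionalIdeal (nonZeroDivisors R) K} {x : K}
    (hx : x ∈ F) (h0 : x ≠ 0) : F ≠ 0 := by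
  rintro rfl
  exact h0 ((FractionalIdeal.mem_zero_iff _).mp hx)

lemma isHomElem_div {p q : R} (hp : SetLike.IsHomogeneousElem 𝒜 p) (hq : SetLike.IsHomogeneousElem 𝒜 q)
    (hq0 : q ≠ 0) : IsHomElem 𝒜 K (algebraMap R K p / algebraMap R K q) :=
  ⟨p, q, hp, hq, hq0, by rw [div_mul_cancel₀ _ (algMap_ne_zero K hq0)]⟩

lemma isHomElem_one : IsHomElem 𝒜 K 1 := ⟨1, 1, hom_one 𝒜, hom_one 𝒜, one_ne_zero, by simp⟩

lemma isHomFrac_coeIdeal {I : Ideal R} (hI : Ideal.IsHomogeneous 𝒜 I) :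
    IsHomFrac 𝒜 K (↑I : FractionalIdeal (nonZeroDivisors R) K) := by
  refine ⟨1, one_ne_zero, hom_one 𝒜, ?_, ?_⟩
  · rw [_root_.map_one, spanSingleton_one, one_mul]
    exact FractionalIdeal.coeIdeal_le_one
  · rw [_root_.map_one, spanSingleton_one, one_mul, idealOf_coeIdeal]
    exact (isHomIdeal_iff 𝒜).mpr hI

lemma isHomogeneous_top : Ideal.IsHomogeneous 𝒜 (⊤ : Ideal R) := fun _ _ _ => trivial

lemma isHomFrac_one : IsHomFrac 𝒜 K (1 : FractionalIdeal (nonZeroDivisors R) K) := by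
  rw [← FractionalIdeal.coeIdeal_top]
  exact isHomFrac_coeIdeal 𝒜 K (isHomogeneous_top 𝒜)

lemma isHomFrac_spanDiv_mul {p q : R} (hp : SetLike.IsHomogeneousElem 𝒜 p)
    (hq : SetLike.IsHomogeneousElem 𝒜 q) (hq0 : q ≠ 0) {I : Ideal R}
    (hI : Ideal.IsHomogeneous 𝒜 I) :
    IsHomFrac 𝒜 K (spanSingleton (nonZeroDivisors R)
      (algebraMap R K p / algebraMap R K q) * ↑I) := by
  have key : spanSingleton (nonZeroDivisors R) (algebraMap R K q) *
      (spanSingleton (nonZeroDivisors R) (algebraMap R K p / algebraMap R K q) * ↑I) =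
      (↑(Ideal.span {p} * I) : FractionalIdeal (nonZeroDivisors R) K) := by
    rw [← mul_assoc, spanSingleton_mul_spanSingleton]
    have : algebraMap R K q * (algebraMap R K p / algebraMap R K q) = algebraMap R K p := by
      rw [mul_div_cancel₀ _ (algMap_ne_zero K hq0)]
    rw [this, FractionalIdeal.coeIdeal_mul, FractionalIdeal.coeIdeal_span_singleton]
  have hhom : Ideal.IsHomogeneous 𝒜 (Ideal.span {p} * I) :=
    Ideal.IsHomogeneous.mul
      (Ideal.homogeneous_span 𝒜 _ (by rintro x ⟨rfl⟩; exact hp)) hI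
  refine ⟨q, hq0, hq, ?_, ?_⟩
  · rw [key]; exact FractionalIdeal.coeIdeal_le_one
  · rw [key, idealOf_coeIdeal]
    exact (isHomIdeal_iff 𝒜).mpr hhom

lemma isHomFrac_span_mul {p : R} (hp : SetLike.IsHomogeneousElem 𝒜 p) {I : Ideal R}
    (hI : Ideal.IsHomogeneous 𝒜 I) :
    IsHomFrac 𝒜 K (spanSingleton (nonZeroDivisors R) (algebraMap R K p) * ↑I) := by
  have h := isHomFrac_spanDiv_mul 𝒜 K hp (hom_one 𝒜) one_ne_zero hI
  rwa [_root_.map_one, _root_.div_one] at h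

lemma isHomFrac_mul {A B : FractionalIdeal (nonZeroDivisors R) K}
    (hA : IsHomFrac 𝒜 K A) (hB : IsHomFrac 𝒜 K B) : IsHomFrac 𝒜 K (A * B) := by
  obtain ⟨s, hs0, hsh, hs1, hsH⟩ := hA
  obtain ⟨t, ht0, hth, ht1, htH⟩ := hB
  have key : spanSingleton (nonZeroDivisors R) (algebraMap R K (s * t)) * (A * B) =
      (↑(idealOf K (spanSingleton (nonZeroDivisors R) (algebraMap R K s) * A) *
         idealOf K (spanSingleton (nonZeroDivisors R) (algebraMap R K t) * B)) :
        FractionalIdeal (nonZeroDivisors R) K) := by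
    rw [FractionalIdeal.coeIdeal_mul, coeIdeal_idealOf K hs1, coeIdeal_idealOf K ht1,
      _root_.map_mul, ← spanSingleton_mul_spanSingleton]
    ring
  refine ⟨s * t, mul_ne_zero hs0 ht0, hom_mul 𝒜 hsh hth, ?_, ?_⟩
  · rw [key]; exact FractionalIdeal.coeIdeal_le_one
  · rw [key, idealOf_coeIdeal]
    exact (isHomIdeal_iff 𝒜).mpr (Ideal.IsHomogeneous.mul
      ((isHomIdeal_iff 𝒜).mp hsH) ((isHomIdeal_iff 𝒜).mp htH))

end AuxFrac

section AuxStar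
variable {Γ : Type*} [AddCommMonoid Γ] [LinearOrder Γ] [IsOrderedCancelAddMonoid Γ] [DecidableEq Γ]
  {R : Type*} [CommRing R] [IsDomain R]
  (𝒜 : Γ → AddSubgroup R) [GradedRing 𝒜]
  (K : Type*) [Field K] [Algebra R K] [IsFractionRing R K]

lemma one_mem_one_frac : (1 : K) ∈ (1 : FractionalIdeal (nonZeroDivisors R) K) :=
  (FractionalIdeal.mem_one_iff _).mpr ⟨1, map_one _⟩

lemma one_frac_ne_zero : (1 : FractionalIdeal (nonZeroDivisors R) K) ≠ 0 :=
  frac_ne_zero_of_mem K (one_mem_one_frac K) one_ne_zero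

lemma exists_ne_zero_mem {A : FractionalIdeal (nonZeroDivisors R) K} (hA : A ≠ 0) :
    ∃ x ∈ A, x ≠ (0 : K) := by
  by_contra hc
  push_neg at hc
  exact hA (FractionalIdeal.eq_zero_iff.mpr fun x hx => hc x hx)

lemma frac_mul_ne_zero {A B : FractionalIdeal (nonZeroDivisors R) K}
    (hA : A ≠ 0) (hB : B ≠ 0) : A * B ≠ 0 := by
  obtain ⟨x, hx, hx0⟩ := exists_ne_zero_mem K hA
  obtain ⟨y, hy, hy0⟩ := exists_ne_zero_mem K hB
  exact frac_ne_zero_of_mem K (FractionalIdeal.mul_mem_mul hx hy) (mul_ne_zero hx0 hy0)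

lemma spanSingleton_ne_zero' {x : K} (hx : x ≠ 0) :
    spanSingleton (nonZeroDivisors R) x ≠ 0 :=
  frac_ne_zero_of_mem K ((FractionalIdeal.mem_spanSingleton _).mpr ⟨1, one_smul _ _⟩) hx

lemma isHomFrac_homElem_mul {x : K} (hx : IsHomElem 𝒜 K x) (hx0 : x ≠ 0)
    {B : FractionalIdeal (nonZeroDivisors R) K} (hB : IsHomFrac 𝒜 K B) :
    IsHomFrac 𝒜 K (spanSingleton (nonZeroDivisors R) x * B) := by
  obtain ⟨a, b, hah, hbh, hb0, hxab⟩ := hx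
  obtain ⟨t, ht0, hth, ht1, htH⟩ := hB
  have ha0 : a ≠ 0 := by
    rintro rfl
    rw [_root_.map_zero] at hxab
    rcases mul_eq_zero.mp hxab with h | h
    · exact hx0 h
    · exact algMap_ne_zero K hb0 h
  have key : spanSingleton (nonZeroDivisors R) (algebraMap R K (b * t)) *
      (spanSingleton (nonZeroDivisors R) x * B) =
      (↑(Ideal.span {a} *
        idealOf K (spanSingleton (nonZeroDivisors R) (algebraMap R K t) * B)) :
        FractionalIdeal (nonZeroDivisors R) K) := by
    rw [FractionalIdeal.coeIdeal_mul, coeIdeal_idealOf K ht1,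
      FractionalIdeal.coeIdeal_span_singleton]
    rw [← mul_assoc, spanSingleton_mul_spanSingleton]
    have heq : algebraMap R K (b * t) * x = algebraMap R K a * algebraMap R K t := by
      rw [_root_.map_mul]
      calc algebraMap R K b * algebraMap R K t * x
          = (x * algebraMap R K b) * algebraMap R K t := by ring
        _ = algebraMap R K a * algebraMap R K t := by rw [hxab]
    rw [heq, ← spanSingleton_mul_spanSingleton, mul_assoc]
  refine ⟨b * t, mul_ne_zero hb0 ht0, hom_mul 𝒜 hbh hth, ?_, ?_⟩
  · rw [key]; exact FractionalIdeal.coeIdeal_le_one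
  · rw [key, idealOf_coeIdeal]
    refine (isHomIdeal_iff 𝒜).mpr (Ideal.IsHomogeneous.mul ?_ ((isHomIdeal_iff 𝒜).mp htH))
    exact Ideal.homogeneous_span 𝒜 _ (by rintro y ⟨rfl⟩; exact hah)

lemma decomp_hom {A : FractionalIdeal (nonZeroDivisors R) K} (hA : IsHomFrac 𝒜 K A)
    {p : K} (hp : p ∈ A) :
    ∃ (σ : Finset Γ) (g : Γ → K), p = ∑ γ ∈ σ, g γ ∧
      ∀ γ ∈ σ, g γ ∈ A ∧ IsHomElem 𝒜 K (g γ) ∧ g γ ≠ 0 := by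
  obtain ⟨t, ht0, hth, h1, h2⟩ := hA
  set τ := algebraMap R K t with hτdef
  have hτ : τ ≠ 0 := algMap_ne_zero K ht0
  have hmem : τ * p ∈ spanSingleton (nonZeroDivisors R) τ * A := mul_mem_span_mul K hp
  obtain ⟨y, hyeq⟩ := (FractionalIdeal.mem_one_iff _).mp (h1 hmem)
  have hyI : y ∈ idealOf K (spanSingleton (nonZeroDivisors R) τ * A) :=
    (mem_idealOf_iff K).mpr (by rw [hyeq]; exact hmem)
  refine ⟨gsupp 𝒜 y, fun γ => τ⁻¹ * algebraMap R K (GradedRing.proj 𝒜 γ y), ?_, ?_⟩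
  · have hp' : p = τ⁻¹ * algebraMap R K y := by
      rw [hyeq, ← mul_assoc, inv_mul_cancel₀ hτ, one_mul]
    rw [hp']
    conv_lhs => rw [← sum_proj 𝒜 y]
    rw [map_sum, Finset.mul_sum]
  · intro γ hγ
    refine ⟨?_, ?_, ?_⟩
    · exact inv_mul_mem K hτ ((mem_idealOf_iff K).mp (h2 y hyI γ))
    · show IsHomElem 𝒜 K (τ⁻¹ * algebraMap R K (GradedRing.proj 𝒜 γ y))
      have heq : τ⁻¹ * algebraMap R K (GradedRing.proj 𝒜 γ y) =
          algebraMap R K (GradedRing.proj 𝒜 γ y) / τ := by rw [inv_mul_eq_div]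
      rw [heq, hτdef]
      exact isHomElem_div 𝒜 K (proj_homogeneous 𝒜 γ y) hth ht0
    · exact mul_ne_zero (inv_ne_zero hτ)
        (algMap_ne_zero K (proj_ne_zero_of_mem_gsupp 𝒜 hγ))

lemma sf_one (sf : HomStarOp 𝒜 K) : sf.toFun 1 = 1 := by
  have h := sf.map_span 1 one_ne_zero (isHomElem_one 𝒜 K)
  rwa [spanSingleton_one] at h

lemma sf_le_one (sf : HomStarOp 𝒜 K) {A : FractionalIdeal (nonZeroDivisors R) K}
    (hA0 : A ≠ 0) (hAh : IsHomFrac 𝒜 K A) (hA1 : A ≤ 1) : sf.toFun A ≤ 1 := by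
  have h := sf.mono A 1 hA0 (one_frac_ne_zero K) hAh (isHomFrac_one 𝒜 K) hA1
  rwa [sf_one] at h

lemma mul_star_le (sf : HomStarOp 𝒜 K) {A B : FractionalIdeal (nonZeroDivisors R) K}
    (hA0 : A ≠ 0) (hAh : IsHomFrac 𝒜 K A) (hB0 : B ≠ 0) (hBh : IsHomFrac 𝒜 K B) :
    A * sf.toFun B ≤ sf.toFun (A * B) := by
  rw [FractionalIdeal.mul_le]
  intro p hp q hq
  obtain ⟨σ, g, rfl, hg⟩ := decomp_hom 𝒜 K hAh hp
  rw [Finset.sum_mul]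
  rw [← FractionalIdeal.mem_coe]
  refine Submodule.sum_mem _ fun γ hγ => ?_
  rw [FractionalIdeal.mem_coe]
  obtain ⟨hgA, hgH, hg0⟩ := hg γ hγ
  have h1 : g γ * q ∈ spanSingleton (nonZeroDivisors R) (g γ) * sf.toFun B :=
    mul_mem_span_mul K hq
  rw [← sf.map_smul (g γ) hg0 hgH B hB0 hBh] at h1
  have h3 : sf.toFun (spanSingleton (nonZeroDivisors R) (g γ) * B) ≤ sf.toFun (A * B) := by
    refine sf.mono _ _ ?_ ?_ ?_ ?_ ?_
    · exact frac_mul_ne_zero K (spanSingleton_ne_zero' K hg0) hB0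
    · exact frac_mul_ne_zero K hA0 hB0
    · exact isHomFrac_homElem_mul 𝒜 K hgH hg0 hBh
    · exact isHomFrac_mul 𝒜 K hAh hBh
    · refine FractionalIdeal.mul_le.mpr fun u hu v hv => ?_
      obtain ⟨c, rfl⟩ := (FractionalIdeal.mem_spanSingleton _).mp hu
      rw [smul_mul_assoc]
      exact Submodule.smul_mem _ c (FractionalIdeal.mul_mem_mul hgA hv)
  exact h3 h1

lemma star_mul_star_le (sf : HomStarOp 𝒜 K) {A B : FractionalIdeal (nonZeroDivisors R) K}
    (hA0 : A ≠ 0) (hAh : IsHomFrac 𝒜 K A) (hB0 : B ≠ 0) (hBh : IsHomFrac 𝒜 K B) :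
    sf.toFun A * sf.toFun B ≤ sf.toFun (A * B) := by
  rw [FractionalIdeal.mul_le]
  intro p hp q hq
  have hsfB0 : sf.toFun B ≠ 0 := by
    intro hc
    exact hB0 (le_antisymm (le_trans (sf.le_star B hB0 hBh) hc.le) (FractionalIdeal.zero_le _))
  obtain ⟨σ, g, rfl, hg⟩ := decomp_hom 𝒜 K (sf.hom B hB0 hBh) hq
  rw [Finset.mul_sum, ← FractionalIdeal.mem_coe]
  refine Submodule.sum_mem _ fun γ hγ => ?_
  rw [FractionalIdeal.mem_coe]
  obtain ⟨hgB, hgH, hg0⟩ := hg γ hγ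
  have h1 : p * g γ ∈ spanSingleton (nonZeroDivisors R) (g γ) * sf.toFun A := by
    rw [mul_comm p (g γ)]
    exact mul_mem_span_mul K hp
  rw [← sf.map_smul (g γ) hg0 hgH A hA0 hAh] at h1
  have hAB0 : A * B ≠ 0 := frac_mul_ne_zero K hA0 hB0
  have hABh : IsHomFrac 𝒜 K (A * B) := isHomFrac_mul 𝒜 K hAh hBh
  have hsfAB0 : sf.toFun (A * B) ≠ 0 := by
    intro hc
    exact hAB0 (le_antisymm (le_trans (sf.le_star _ hAB0 hABh) hc.le)
      (FractionalIdeal.zero_le _))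
  have h3 : sf.toFun (spanSingleton (nonZeroDivisors R) (g γ) * A) ≤ sf.toFun (A * B) := by
    have h4 : sf.toFun (spanSingleton (nonZeroDivisors R) (g γ) * A) ≤
        sf.toFun (sf.toFun (A * B)) := by
      refine sf.mono _ _ ?_ ?_ ?_ ?_ ?_
      · exact frac_mul_ne_zero K (spanSingleton_ne_zero' K hg0) hA0
      · exact hsfAB0
      · exact isHomFrac_homElem_mul 𝒜 K hgH hg0 hAh
      · exact sf.hom _ hAB0 hABh
      · refine FractionalIdeal.mul_le.mpr fun u hu v hv => ?_
        obtain ⟨c, rfl⟩ := (FractionalIdeal.mem_spanSingleton _).mp hu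
        rw [smul_mul_assoc]
        refine Submodule.smul_mem _ c ?_
        have : v * g γ ∈ A * sf.toFun B := FractionalIdeal.mul_mem_mul hv hgB
        have h5 := mul_star_le 𝒜 K sf hA0 hAh hB0 hBh this
        rwa [mul_comm v (g γ)] at h5
    rwa [sf.idem _ hAB0 hABh] at h4
  exact h3 h1

lemma isHomogeneous_pow {Q : Ideal R} (hQ : Ideal.IsHomogeneous 𝒜 Q) (n : ℕ) :
    Ideal.IsHomogeneous 𝒜 (Q ^ (n + 1)) := by
  induction n with
  | zero => rwa [pow_one]
  | succ n ih => rw [pow_succ]; exact Ideal.IsHomogeneous.mul ih hQ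

lemma coeIdeal_pow (Q : Ideal R) (n : ℕ) :
    (↑(Q ^ n) : FractionalIdeal (nonZeroDivisors R) K) = (↑Q : FractionalIdeal (nonZeroDivisors R) K) ^ n := by
  induction n with
  | zero => simp
  | succ n ih => rw [pow_succ, pow_succ, FractionalIdeal.coeIdeal_mul, ih]

lemma coeIdeal_pow_ne_zero {Q : Ideal R} (hQ : Q ≠ ⊥) (n : ℕ) :
    (↑(Q ^ (n + 1)) : FractionalIdeal (nonZeroDivisors R) K) ≠ 0 := by
  obtain ⟨q, hq, hq0⟩ := Submodule.exists_mem_ne_zero_of_ne_bot hQ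
  have h1 : q ^ (n + 1) ∈ Q ^ (n + 1) := Ideal.pow_mem_pow hq _
  have h2 : algebraMap R K (q ^ (n+1)) ∈ (↑(Q ^ (n+1)) : FractionalIdeal (nonZeroDivisors R) K) :=
    (FractionalIdeal.mem_coeIdeal _).mpr ⟨_, h1, rfl⟩
  exact frac_ne_zero_of_mem K h2 (algMap_ne_zero K (pow_ne_zero _ hq0))

lemma one_mem_sf_pow (sf : HomStarOp 𝒜 K) {Q : Ideal R} (hQh : Ideal.IsHomogeneous 𝒜 Q)
    (hQ0 : Q ≠ ⊥) (h1 : (1 : K) ∈ sf.toFun ↑Q) (n : ℕ) :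
    (1 : K) ∈ sf.toFun (↑(Q ^ (n + 1)) : FractionalIdeal (nonZeroDivisors R) K) := by
  induction n with
  | zero => rwa [pow_one]
  | succ n ih =>
    have hmul : (1 : K) * 1 ∈ sf.toFun (↑(Q ^ (n+1))) * sf.toFun (↑Q) :=
      FractionalIdeal.mul_mem_mul ih h1
    rw [mul_one] at hmul
    have hle := star_mul_star_le 𝒜 K sf (coeIdeal_pow_ne_zero K hQ0 n)
      (isHomFrac_coeIdeal 𝒜 K (isHomogeneous_pow 𝒜 hQh n))
      (by rwa [Ne, FractionalIdeal.coeIdeal_eq_zero])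
      (isHomFrac_coeIdeal 𝒜 K hQh)
    have := hle hmul
    rwa [← FractionalIdeal.coeIdeal_mul, ← pow_succ] at this

end AuxStar

section AuxEStar
variable {Γ : Type*} [AddCommMonoid Γ] [LinearOrder Γ] [IsOrderedCancelAddMonoid Γ] [DecidableEq Γ]
  {R : Type*} [CommRing R] [IsDomain R]
  (𝒜 : Γ → AddSubgroup R) [GradedRing 𝒜]
  (K : Type*) [Field K] [Algebra R K] [IsFractionRing R K]

lemma isFractional_le' {S : Submodule R K} {F : FractionalIdeal (nonZeroDivisors R) K}
    (h : S ≤ (F : Submodule R K)) : IsFractional (nonZeroDivisors R) S := by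
  obtain ⟨a, ha, hfr⟩ := F.isFractional
  exact ⟨a, ha, fun b hb => hfr b (h hb)⟩

lemma eStarSub_le_term (sf : HomStarOp 𝒜 K) {A : FractionalIdeal (nonZeroDivisors R) K}
    {z : K} (hz : z ≠ 0) (hz1 : spanSingleton (nonZeroDivisors R) z * A ≤ 1) :
    eStarSub 𝒜 K sf A ≤
      ↑(spanSingleton (nonZeroDivisors R) z⁻¹ *
        sf.toFun (Cfrac 𝒜 K (spanSingleton (nonZeroDivisors R) z * A))) := by
  rw [eStarSub]
  exact iInf₂_le z ⟨hz, hz1⟩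

lemma isFractional_eStarSub (sf : HomStarOp 𝒜 K) {A : FractionalIdeal (nonZeroDivisors R) K}
    (hA1 : A ≤ 1) : IsFractional (nonZeroDivisors R) (eStarSub 𝒜 K sf A) :=
  isFractional_le' K
    (eStarSub_le_term 𝒜 K sf one_ne_zero (by rwa [spanSingleton_one, one_mul]))

lemma mem_eStar_iff (sf : HomStarOp 𝒜 K) {A : FractionalIdeal (nonZeroDivisors R) K}
    (hA1 : A ≤ 1) {x : K} :
    x ∈ eStar 𝒜 K sf A ↔ ∀ z : K, z ≠ 0 → spanSingleton (nonZeroDivisors R) z * A ≤ 1 →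
      x ∈ spanSingleton (nonZeroDivisors R) z⁻¹ *
        sf.toFun (Cfrac 𝒜 K (spanSingleton (nonZeroDivisors R) z * A)) := by
  have e : eStar 𝒜 K sf A = ⟨eStarSub 𝒜 K sf A, isFractional_eStarSub 𝒜 K sf hA1⟩ := by
    unfold eStar; exact dif_pos _
  rw [e]
  change x ∈ eStarSub 𝒜 K sf A ↔ _
  rw [eStarSub]
  simp only [Submodule.mem_iInf, Set.mem_setOf_eq, FractionalIdeal.mem_coe]
  constructor
  · intro h z hz hz1
    exact h z ⟨hz, hz1⟩
  · rintro h z ⟨hz, hz1⟩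
    exact h z hz hz1

lemma zero_mem_eStar (sf : HomStarOp 𝒜 K) (A : FractionalIdeal (nonZeroDivisors R) K) :
    (0 : K) ∈ eStar 𝒜 K sf A := by
  by_cases h : IsFractional (nonZeroDivisors R) (eStarSub 𝒜 K sf A)
  · simp only [eStar, dif_pos h]
    exact Submodule.zero_mem _
  · simp only [eStar, dif_neg h]
    exact Submodule.zero_mem _

/-- The heart of the argument: if `1 ∈ (C(J))^⋆` and `J` contains a nonzero homogeneous
element, then for every `z` in the inverse of `J`, `z ∈ (C(zJ))^⋆`. -/
lemma lemma_H (sf : HomStarOp 𝒜 K) {J : Ideal R} {s : Finset R} (hJ : J = Ideal.span ↑s)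
    {a : R} {δ : Γ} (haJ : a ∈ J) (ha : a ∈ 𝒜 δ) (ha0 : a ≠ 0)
    (h1 : (1 : K) ∈ sf.toFun ↑(homC 𝒜 J))
    {z : K} (hz : z ≠ 0)
    (hz1 : spanSingleton (nonZeroDivisors R) z * (↑J : FractionalIdeal (nonZeroDivisors R) K) ≤ 1) :
    z ∈ sf.toFun (Cfrac 𝒜 K (spanSingleton (nonZeroDivisors R) z * (↑J : FractionalIdeal (nonZeroDivisors R) K))) := by
  classical
  set X : Ideal R := homC 𝒜 (idealOf K (spanSingleton (nonZeroDivisors R) z * (↑J : FractionalIdeal (nonZeroDivisors R) K))) with hXdef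
  have hCfrac : Cfrac 𝒜 K (spanSingleton (nonZeroDivisors R) z * (↑J : FractionalIdeal (nonZeroDivisors R) K)) = ↑X := rfl
  have haK : algebraMap R K a ∈ (↑J : FractionalIdeal (nonZeroDivisors R) K) :=
    (FractionalIdeal.mem_coeIdeal _).mpr ⟨a, haJ, rfl⟩
  have haz : z * algebraMap R K a ∈ (1 : FractionalIdeal (nonZeroDivisors R) K) :=
    hz1 (mul_mem_span_mul K haK)
  obtain ⟨w, hw⟩ := (FractionalIdeal.mem_one_iff _).mp haz
  have hw0 : w ≠ 0 := by
    rintro rfl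
    rw [_root_.map_zero] at hw
    exact mul_ne_zero hz (algMap_ne_zero K ha0) hw.symm
  have hv : ∀ f ∈ J, ∃ v : R, algebraMap R K v = z * algebraMap R K f ∧
      v ∈ idealOf K (spanSingleton (nonZeroDivisors R) z * (↑J : FractionalIdeal (nonZeroDivisors R) K)) := by
    intro f hf
    have hfK : algebraMap R K f ∈ (↑J : FractionalIdeal (nonZeroDivisors R) K) :=
      (FractionalIdeal.mem_coeIdeal _).mpr ⟨f, hf, rfl⟩
    have hmem : z * algebraMap R K f ∈ spanSingleton (nonZeroDivisors R) z * ↑J :=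
      mul_mem_span_mul K hfK
    obtain ⟨v, hveq⟩ := (FractionalIdeal.mem_one_iff _).mp (hz1 hmem)
    exact ⟨v, hveq, (mem_idealOf_iff K).mpr (by rw [hveq]; exact hmem)⟩
  have hav : ∀ f v : R, algebraMap R K v = z * algebraMap R K f → a * v = w * f := by
    intro f v hveq
    apply IsFractionRing.injective R K
    rw [_root_.map_mul, _root_.map_mul, hveq, hw]
    ring
  set m := (gsupp 𝒜 w).card with hmdef
  set Q := homC 𝒜 J with hQdef
  have hQ : Q = ∑ f ∈ s, cI 𝒜 f := by rw [hQdef, hJ, homC_span_finset]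
  have hQhom : Ideal.IsHomogeneous 𝒜 Q := homC_homogeneous 𝒜 J
  have hJ0 : J ≠ ⊥ := fun hc => ha0 (by rwa [hc, Ideal.mem_bot] at haJ)
  have hQ0 : Q ≠ ⊥ := homC_ne_bot 𝒜 hJ0
  have hQpow : (1 : K) ∈ sf.toFun (↑(Q ^ (s.card * m + 1)) :
      FractionalIdeal (nonZeroDivisors R) K) :=
    one_mem_sf_pow 𝒜 K sf hQhom hQ0 h1 (s.card * m)
  have hX0 : X ≠ ⊥ := by
    refine homC_ne_bot 𝒜 fun hc => ?_
    have hwX : w ∈ idealOf K (spanSingleton (nonZeroDivisors R) z * (↑J : FractionalIdeal (nonZeroDivisors R) K)) :=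
      (mem_idealOf_iff K).mpr (by rw [hw]; exact mul_mem_span_mul K haK)
    rw [hc, Ideal.mem_bot] at hwX
    exact hw0 hwX
  -- Claim R
  have claimR : ∀ μ ∈ gsupp 𝒜 w,
      Ideal.span {GradedRing.proj 𝒜 μ w} * Q ^ (s.card * m + 1) ≤ Ideal.span {a} * X := by
    intro μ hμ
    have h2 : Ideal.span {GradedRing.proj 𝒜 μ w} ≤ cI 𝒜 w := by
      rw [Ideal.span_le, Set.singleton_subset_iff]
      exact proj_mem_cI 𝒜 w μ
    calc Ideal.span {GradedRing.proj 𝒜 μ w} * Q ^ (s.card * m + 1)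
        ≤ cI 𝒜 w * Q ^ (s.card * m + 1) := Ideal.mul_mono_left h2
      _ ≤ cI 𝒜 w * ∑ f ∈ s, cI 𝒜 f ^ (m + 1) := by
          refine Ideal.mul_mono_right ?_
          rw [hQ]
          exact ideal_sum_pow_le s _ m
      _ = ∑ f ∈ s, cI 𝒜 w * cI 𝒜 f ^ (m + 1) := Finset.mul_sum _ _ _
      _ ≤ Ideal.span {a} * X := by
          refine sum_ideal_le' fun f hf => ?_
          have hfJ : f ∈ J := by rw [hJ]; exact Ideal.subset_span hf
          obtain ⟨v, hveq, hvI⟩ := hv f hfJ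
          have hDM := dedekind_mertens 𝒜 f m w (by omega)
          have hfw : f * w = a * v := by rw [mul_comm f w, hav f v hveq]
          calc cI 𝒜 w * cI 𝒜 f ^ (m + 1) = cI 𝒜 f ^ (m + 1) * cI 𝒜 w := by ring
            _ ≤ cI 𝒜 f ^ m * cI 𝒜 (f * w) := hDM
            _ = cI 𝒜 f ^ m * cI 𝒜 (a * v) := by rw [hfw]
            _ ≤ cI 𝒜 f ^ m * (Ideal.span {a} * cI 𝒜 v) :=
                Ideal.mul_mono_right (cI_hom_mul_le 𝒜 ha v)
            _ = Ideal.span {a} * (cI 𝒜 f ^ m * cI 𝒜 v) := by ring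
            _ ≤ Ideal.span {a} * X := by
                refine Ideal.mul_mono_right ?_
                calc cI 𝒜 f ^ m * cI 𝒜 v ≤ cI 𝒜 v := Ideal.mul_le_right
                  _ ≤ X := cI_le_homC 𝒜 hvI
  -- decomposition of z
  have ha' : algebraMap R K a ≠ 0 := algMap_ne_zero K ha0
  have hzdecomp : z = ∑ μ ∈ gsupp 𝒜 w,
      algebraMap R K (GradedRing.proj 𝒜 μ w) / algebraMap R K a := by
    have hzw : z = algebraMap R K w / algebraMap R K a := by
      rw [hw, mul_div_assoc, div_self ha', mul_one]
    rw [hzw]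
    conv_lhs => rw [← sum_proj 𝒜 w]
    rw [map_sum, Finset.sum_div]
  rw [hCfrac, hzdecomp, ← FractionalIdeal.mem_coe]
  refine Submodule.sum_mem _ fun μ hμ => ?_
  rw [FractionalIdeal.mem_coe]
  set uμ := algebraMap R K (GradedRing.proj 𝒜 μ w) / algebraMap R K a with huμ
  have hpμ0 : GradedRing.proj 𝒜 μ w ≠ 0 := proj_ne_zero_of_mem_gsupp 𝒜 hμ
  have hu0 : uμ ≠ 0 := div_ne_zero (algMap_ne_zero K hpμ0) ha'
  have huH : IsHomElem 𝒜 K uμ := isHomElem_div 𝒜 K (proj_homogeneous 𝒜 μ w) ⟨δ, ha⟩ ha0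
  have h3 : uμ * 1 ∈ spanSingleton (nonZeroDivisors R) uμ *
      sf.toFun (↑(Q ^ (s.card * m + 1))) := mul_mem_span_mul K hQpow
  rw [mul_one, ← sf.map_smul uμ hu0 huH _ (coeIdeal_pow_ne_zero K hQ0 (s.card * m))
    (isHomFrac_coeIdeal 𝒜 K (isHomogeneous_pow 𝒜 hQhom (s.card * m)))] at h3
  refine sf.mono _ _ ?_ ?_ ?_ ?_ ?_ h3
  · exact frac_mul_ne_zero K (spanSingleton_ne_zero' K hu0)
      (coeIdeal_pow_ne_zero K hQ0 (s.card * m))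
  · rwa [Ne, FractionalIdeal.coeIdeal_eq_zero]
  · exact isHomFrac_spanDiv_mul 𝒜 K (proj_homogeneous 𝒜 μ w) ⟨δ, ha⟩ ha0
      (isHomogeneous_pow 𝒜 hQhom (s.card * m))
  · exact isHomFrac_coeIdeal 𝒜 K (homC_homogeneous 𝒜 _)
  · -- containment
    refine FractionalIdeal.mul_le.mpr fun u hu y hy => ?_
    obtain ⟨c, rfl⟩ := (FractionalIdeal.mem_spanSingleton _).mp hu
    obtain ⟨q', hq', rfl⟩ := (FractionalIdeal.mem_coeIdeal _).mp hy
    have hmemR : GradedRing.proj 𝒜 μ w * q' ∈ Ideal.span {a} * X :=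
      claimR μ hμ (Ideal.mul_mem_mul (Ideal.mem_span_singleton_self _) hq')
    obtain ⟨x', hx', heq⟩ := Ideal.mem_span_singleton_mul.mp hmemR
    have hcalc : uμ * algebraMap R K q' = algebraMap R K x' := by
      rw [huμ, div_mul_eq_mul_div, ← _root_.map_mul, ← heq, _root_.map_mul,
        mul_comm (algebraMap R K a) (algebraMap R K x'), mul_div_assoc,
        div_self ha', mul_one]
    rw [smul_mul_assoc, hcalc]
    exact Submodule.smul_mem _ c ((FractionalIdeal.mem_coeIdeal _).mpr ⟨x', hx', rfl⟩)

lemma one_mem_eStar (sf : HomStarOp 𝒜 K) {J : Ideal R} {s : Finset R}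
    (hJ : J = Ideal.span ↑s) {a : R} {δ : Γ} (haJ : a ∈ J) (ha : a ∈ 𝒜 δ) (ha0 : a ≠ 0)
    (h1 : (1 : K) ∈ sf.toFun ↑(homC 𝒜 J)) :
    (1 : K) ∈ eStar 𝒜 K sf ↑J := by
  rw [mem_eStar_iff 𝒜 K sf FractionalIdeal.coeIdeal_le_one]
  intro z hz hz1
  have hzmem := lemma_H 𝒜 K sf hJ haJ ha ha0 h1 hz hz1
  have hinv : z⁻¹ ∈ spanSingleton (nonZeroDivisors R) z⁻¹ :=
    (FractionalIdeal.mem_spanSingleton _).mpr ⟨1, one_smul _ _⟩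
  have := FractionalIdeal.mul_mem_mul hinv hzmem
  rwa [inv_mul_cancel₀ hz] at this

end AuxEStar

section AuxN
variable {Γ : Type*} [AddCommMonoid Γ] [LinearOrder Γ] [IsOrderedCancelAddMonoid Γ] [DecidableEq Γ]
  {R : Type*} [CommRing R] [IsDomain R]
  (𝒜 : Γ → AddSubgroup R) [GradedRing 𝒜]
  (K : Type*) [Field K] [Algebra R K] [IsFractionRing R K]

lemma mem_coeIdeal_of {I : Ideal R} {r : R} (hr : r ∈ I) :
    algebraMap R K r ∈ (↑I : FractionalIdeal (nonZeroDivisors R) K) :=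
  (FractionalIdeal.mem_coeIdeal _).mpr ⟨r, hr, rfl⟩

lemma coeIdeal_ne_zero' {I : Ideal R} (h : I ≠ ⊥) :
    (↑I : FractionalIdeal (nonZeroDivisors R) K) ≠ 0 := by
  rwa [Ne, FractionalIdeal.coeIdeal_eq_zero]

lemma ne_bot_of_mem {I : Ideal R} {r : R} (hr : r ∈ I) (h0 : r ≠ 0) : I ≠ ⊥ := by
  rintro rfl
  exact h0 (Ideal.mem_bot.mp hr)

/-- `x ∈ (C)^⋆` is monotone in the homogeneous f.g. ideal `C`. -/
lemma sf_coeIdeal_mono (sf : HomStarOp 𝒜 K) {C D : Ideal R} (hC0 : C ≠ ⊥)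
    (hCh : Ideal.IsHomogeneous 𝒜 C) (hD0 : D ≠ ⊥) (hDh : Ideal.IsHomogeneous 𝒜 D)
    (hle : C ≤ D) :
    sf.toFun (↑C : FractionalIdeal (nonZeroDivisors R) K) ≤ sf.toFun ↑D :=
  sf.mono _ _ (coeIdeal_ne_zero' K hC0) (coeIdeal_ne_zero' K hD0)
    (isHomFrac_coeIdeal 𝒜 K hCh) (isHomFrac_coeIdeal 𝒜 K hDh)
    ((FractionalIdeal.coeIdeal_le_coeIdeal K).mpr hle)

lemma mem_sf_self (sf : HomStarOp 𝒜 K) {C : Ideal R} (hC0 : C ≠ ⊥)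
    (hCh : Ideal.IsHomogeneous 𝒜 C) {r : R} (hr : r ∈ C) :
    algebraMap R K r ∈ sf.toFun (↑C : FractionalIdeal (nonZeroDivisors R) K) :=
  sf.le_star _ (coeIdeal_ne_zero' K hC0) (isHomFrac_coeIdeal 𝒜 K hCh)
    (mem_coeIdeal_of K hr)

/-- The candidate ideal `N`: the `⋆_f`-closure of `C(M)`. -/
def NId (sf : HomStarOp 𝒜 K) (M : Ideal R) : Ideal R where
  carrier := {r | r = 0 ∨ ∃ C : Ideal R, C ≠ ⊥ ∧ C.FG ∧ Ideal.IsHomogeneous 𝒜 C ∧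
    C ≤ homC 𝒜 M ∧ algebraMap R K r ∈ sf.toFun ↑C}
  zero_mem' := Or.inl rfl
  add_mem' := by
    intro x y hx hy
    rcases hx with rfl | ⟨C₁, hC₁0, hC₁fg, hC₁h, hC₁le, hC₁m⟩
    · rwa [zero_add]
    rcases hy with rfl | ⟨C₂, hC₂0, hC₂fg, hC₂h, hC₂le, hC₂m⟩
    · rw [add_zero]
      exact Or.inr ⟨C₁, hC₁0, hC₁fg, hC₁h, hC₁le, hC₁m⟩
    refine Or.inr ⟨C₁ ⊔ C₂, ?_, Submodule.FG.sup hC₁fg hC₂fg,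
      Ideal.IsHomogeneous.sup hC₁h hC₂h, sup_le hC₁le hC₂le, ?_⟩
    · intro hc
      exact hC₁0 (le_antisymm (le_trans le_sup_left hc.le) bot_le)
    · rw [_root_.map_add]
      refine Submodule.add_mem _ ?_ ?_
      · exact sf_coeIdeal_mono 𝒜 K sf hC₁0 hC₁h
          (fun hc => hC₁0 (le_antisymm (le_trans le_sup_left hc.le) bot_le))
          (Ideal.IsHomogeneous.sup hC₁h hC₂h) le_sup_left hC₁m
      · exact sf_coeIdeal_mono 𝒜 K sf hC₂0 hC₂h
          (fun hc => hC₁0 (le_antisymm (le_trans le_sup_left hc.le) bot_le))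
          (Ideal.IsHomogeneous.sup hC₁h hC₂h) le_sup_right hC₂m
  smul_mem' := by
    intro c x hx
    rcases hx with rfl | ⟨C, hC0, hCfg, hCh, hCle, hCm⟩
    · exact Or.inl (smul_zero c)
    refine Or.inr ⟨C, hC0, hCfg, hCh, hCle, ?_⟩
    rw [smul_eq_mul, _root_.map_mul, ← Algebra.smul_def]
    exact Submodule.smul_mem _ c hCm

lemma mem_NId_iff (sf : HomStarOp 𝒜 K) (M : Ideal R) {r : R} :
    r ∈ NId 𝒜 K sf M ↔ r = 0 ∨ ∃ C : Ideal R, C ≠ ⊥ ∧ C.FG ∧ Ideal.IsHomogeneous 𝒜 C ∧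
      C ≤ homC 𝒜 M ∧ algebraMap R K r ∈ sf.toFun ↑C := Iff.rfl

lemma homC_le_NId (sf : HomStarOp 𝒜 K) (M : Ideal R) : homC 𝒜 M ≤ NId 𝒜 K sf M := by
  intro x hx
  rcases eq_or_ne x 0 with rfl | hx0
  · exact Or.inl rfl
  obtain ⟨J', hJ'le, hJ'fg, hxJ'⟩ := exists_fg_homC 𝒜 hx
  refine Or.inr ⟨homC 𝒜 J', ne_bot_of_mem hxJ' hx0, homC_fg 𝒜 hJ'fg,
    homC_homogeneous 𝒜 J', homC_mono 𝒜 hJ'le, ?_⟩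
  exact mem_sf_self 𝒜 K sf (ne_bot_of_mem hxJ' hx0) (homC_homogeneous 𝒜 J') hxJ'

lemma le_NId (sf : HomStarOp 𝒜 K) (M : Ideal R) : M ≤ NId 𝒜 K sf M :=
  le_trans (le_homC 𝒜 M) (homC_le_NId 𝒜 K sf M)

lemma NId_homogeneous (sf : HomStarOp 𝒜 K) (M : Ideal R) :
    Ideal.IsHomogeneous 𝒜 (NId 𝒜 K sf M) := by
  rw [← isHomIdeal_iff]
  intro r hr γ
  rcases hr with rfl | ⟨C, hC0, hCfg, hCh, hCle, hCm⟩
  · rw [(GradedRing.proj 𝒜 γ).map_zero]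
    exact Or.inl rfl
  rcases eq_or_ne (GradedRing.proj 𝒜 γ r) 0 with hp0 | hp0
  · rw [hp0]; exact Or.inl rfl
  refine Or.inr ⟨C, hC0, hCfg, hCh, hCle, ?_⟩
  -- use homogeneity of sf.toFun ↑C
  obtain ⟨t, ht0, hth, ht1, htH⟩ := sf.hom _ (coeIdeal_ne_zero' K hC0)
    (isHomFrac_coeIdeal 𝒜 K hCh)
  obtain ⟨ε, htε⟩ := hth
  have hτ : algebraMap R K t ≠ 0 := algMap_ne_zero K ht0
  have h1 : algebraMap R K (t * r) ∈ spanSingleton (nonZeroDivisors R) (algebraMap R K t) *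
      sf.toFun ↑C := by
    rw [_root_.map_mul]
    exact mul_mem_span_mul K hCm
  have h2 : t * r ∈ idealOf K (spanSingleton (nonZeroDivisors R) (algebraMap R K t) *
      sf.toFun ↑C) := (mem_idealOf_iff K).mpr h1
  have h3 := htH _ h2 (ε + γ)
  rw [proj_hom_mul 𝒜 htε r γ] at h3
  have h4 : algebraMap R K (t * GradedRing.proj 𝒜 γ r) ∈
      spanSingleton (nonZeroDivisors R) (algebraMap R K t) * sf.toFun ↑C :=
    (mem_idealOf_iff K).mp h3
  have h5 := inv_mul_mem K hτ h4
  rwa [_root_.map_mul, ← mul_assoc, inv_mul_cancel₀ hτ, one_mul] at h5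

lemma NId_le_one_frac (sf : HomStarOp 𝒜 K) (M : Ideal R) {C : Ideal R} (hC0 : C ≠ ⊥)
    (hCh : Ideal.IsHomogeneous 𝒜 C) :
    sf.toFun (↑C : FractionalIdeal (nonZeroDivisors R) K) ≤ 1 :=
  sf_le_one 𝒜 K sf (coeIdeal_ne_zero' K hC0) (isHomFrac_coeIdeal 𝒜 K hCh)
    FractionalIdeal.coeIdeal_le_one

/-- cover a finite subset of `N` by a single witness ideal -/
lemma NId_cover (sf : HomStarOp 𝒜 K) (M : Ideal R) {a : R} (haM : a ∈ M) (ha0 : a ≠ 0)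
    (u : Finset R) (hu : ∀ g ∈ u, g ∈ NId 𝒜 K sf M) :
    ∃ C' : Ideal R, C' ≠ ⊥ ∧ C'.FG ∧ Ideal.IsHomogeneous 𝒜 C' ∧ C' ≤ homC 𝒜 M ∧
      ∀ g ∈ u, algebraMap R K g ∈ sf.toFun ↑C' := by
  classical
  induction u using Finset.induction with
  | empty =>
    refine ⟨cI 𝒜 a, ne_bot_of_mem (self_mem_cI 𝒜 a) ha0, cI_fg 𝒜 a, cI_homogeneous 𝒜 a,
      cI_le_homC 𝒜 haM, by simp⟩
  | @insert g u hgu ih =>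
    obtain ⟨C', hC'0, hC'fg, hC'h, hC'le, hC'm⟩ :=
      ih (fun g' hg' => hu g' (Finset.mem_insert_of_mem hg'))
    rcases hu g (Finset.mem_insert_self g u) with rfl | ⟨Cg, hCg0, hCgfg, hCgh, hCgle, hCgm⟩
    · refine ⟨C', hC'0, hC'fg, hC'h, hC'le, ?_⟩
      intro g' hg'
      rcases Finset.mem_insert.mp hg' with rfl | hg'u
      · rw [_root_.map_zero]; exact Submodule.zero_mem _
      · exact hC'm g' hg'u
    · have hsup0 : C' ⊔ Cg ≠ ⊥ := fun hc => hC'0 (le_antisymm (le_trans le_sup_left hc.le) bot_le)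
      have hsuph : Ideal.IsHomogeneous 𝒜 (C' ⊔ Cg) := Ideal.IsHomogeneous.sup hC'h hCgh
      refine ⟨C' ⊔ Cg, hsup0, Submodule.FG.sup hC'fg hCgfg, hsuph, sup_le hC'le hCgle, ?_⟩
      intro g' hg'
      rcases Finset.mem_insert.mp hg' with rfl | hg'u
      · exact sf_coeIdeal_mono 𝒜 K sf hCg0 hCgh hsup0 hsuph le_sup_right hCgm
      · exact sf_coeIdeal_mono 𝒜 K sf hC'0 hC'h hsup0 hsuph le_sup_left (hC'm g' hg'u)

end AuxN

section AuxFinal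
variable {Γ : Type*} [AddCommMonoid Γ] [LinearOrder Γ] [IsOrderedCancelAddMonoid Γ] [DecidableEq Γ]
  {R : Type*} [CommRing R] [IsDomain R]
  (𝒜 : Γ → AddSubgroup R) [GradedRing 𝒜]
  (K : Type*) [Field K] [Algebra R K] [IsFractionRing R K]

lemma sf_ne_zero (sf : HomStarOp 𝒜 K) {C : Ideal R} (hC0 : C ≠ ⊥)
    (hCh : Ideal.IsHomogeneous 𝒜 C) :
    sf.toFun (↑C : FractionalIdeal (nonZeroDivisors R) K) ≠ 0 := by
  intro hc
  refine coeIdeal_ne_zero' K hC0 (le_antisymm ?_ (FractionalIdeal.zero_le _))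
  exact le_trans (sf.le_star _ (coeIdeal_ne_zero' K hC0) (isHomFrac_coeIdeal 𝒜 K hCh)) hc.le

lemma coe_coeIdeal_map (I : Ideal R) :
    ((↑I : FractionalIdeal (nonZeroDivisors R) K) : Submodule R K) =
      Submodule.map (Algebra.linearMap R K) I := by
  rw [FractionalIdeal.coe_coeIdeal]; rfl

lemma NId_closed (sf : HomStarOp 𝒜 K) {M : Ideal R} {a : R} (haM : a ∈ M) (ha0 : a ≠ 0) :
    finTypeSet K (eStar 𝒜 K sf) (↑(NId 𝒜 K sf M) : FractionalIdeal (nonZeroDivisors R) K) =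
      {x : K | x ∈ (↑(NId 𝒜 K sf M) : FractionalIdeal (nonZeroDivisors R) K)} := by
  classical
  ext x
  simp only [Set.mem_setOf_eq]
  constructor
  · intro hx
    rw [finTypeSet] at hx
    obtain ⟨B, hB, hxB⟩ := Set.mem_iUnion₂.mp hx
    obtain ⟨hB0, hBle, hBfg⟩ := hB
    have hB1 : B ≤ 1 := le_trans hBle FractionalIdeal.coeIdeal_le_one
    set I_B := idealOf K B with hIBdef
    have hIB : (↑I_B : FractionalIdeal (nonZeroDivisors R) K) = B := coeIdeal_idealOf K hB1
    have hIBle : I_B ≤ NId 𝒜 K sf M :=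
      (FractionalIdeal.coeIdeal_le_coeIdeal K).mp (by rw [hIB]; exact hBle)
    have hIBfg : I_B.FG := by
      refine Submodule.fg_of_fg_map_injective (Algebra.linearMap R K)
        (IsFractionRing.injective R K) ?_
      have hmap : Submodule.map (Algebra.linearMap R K) I_B = (B : Submodule R K) := by
        rw [← coe_coeIdeal_map, hIB]
      rw [hmap]
      exact hBfg
    have hIB0 : I_B ≠ ⊥ := by
      intro hc
      exact hB0 (by rw [← hIB, hc, FractionalIdeal.coeIdeal_bot])
    have hx1 : x ∈ sf.toFun (↑(homC 𝒜 I_B) : FractionalIdeal (nonZeroDivisors R) K) := by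
      have h := (mem_eStar_iff 𝒜 K sf hB1).mp hxB 1 one_ne_zero
        (by rw [spanSingleton_one, one_mul]; exact hB1)
      simp only [inv_one, spanSingleton_one, one_mul] at h
      exact h
    have hhc0 : homC 𝒜 I_B ≠ ⊥ := homC_ne_bot 𝒜 hIB0
    have hhcle : homC 𝒜 I_B ≤ NId 𝒜 K sf M :=
      le_trans (homC_mono 𝒜 hIBle)
        (homC_le_of_homogeneous 𝒜 (NId_homogeneous 𝒜 K sf M))
    obtain ⟨u, hu⟩ := homC_fg 𝒜 hIBfg
    obtain ⟨C', hC'0, hC'fg, hC'h, hC'le, hC'm⟩ := NId_cover 𝒜 K sf M haM ha0 u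
      (fun g hg => hhcle (by rw [← hu]; exact Ideal.subset_span hg))
    have hle2R : homC 𝒜 I_B ≤ idealOf K (sf.toFun ↑C') := by
      rw [← hu, Ideal.span_le]
      intro g hg
      exact (mem_idealOf_iff K).mpr (hC'm g hg)
    have hle2 : (↑(homC 𝒜 I_B) : FractionalIdeal (nonZeroDivisors R) K) ≤ sf.toFun ↑C' := by
      intro y hy
      obtain ⟨r, hr, rfl⟩ := (FractionalIdeal.mem_coeIdeal _).mp hy
      exact (mem_idealOf_iff K).mp (hle2R hr)
    have hx2 : x ∈ sf.toFun (sf.toFun (↑C' : FractionalIdeal (nonZeroDivisors R) K)) := by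
      refine sf.mono _ _ (coeIdeal_ne_zero' K hhc0) (sf_ne_zero 𝒜 K sf hC'0 hC'h)
        (isHomFrac_coeIdeal 𝒜 K (homC_homogeneous 𝒜 _))
        (sf.hom _ (coeIdeal_ne_zero' K hC'0) (isHomFrac_coeIdeal 𝒜 K hC'h)) hle2 hx1
    rw [sf.idem _ (coeIdeal_ne_zero' K hC'0) (isHomFrac_coeIdeal 𝒜 K hC'h)] at hx2
    have hx3 : x ∈ (1 : FractionalIdeal (nonZeroDivisors R) K) :=
      NId_le_one_frac 𝒜 K sf M hC'0 hC'h hx2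
    obtain ⟨r, rfl⟩ := (FractionalIdeal.mem_one_iff _).mp hx3
    refine mem_coeIdeal_of K ?_
    rcases eq_or_ne r 0 with rfl | hr0
    · exact (NId 𝒜 K sf M).zero_mem
    · exact Or.inr ⟨C', hC'0, hC'fg, hC'h, hC'le, hx2⟩
  · intro hx
    obtain ⟨r, hrN, rfl⟩ := (FractionalIdeal.mem_coeIdeal _).mp hx
    rw [finTypeSet]
    rcases eq_or_ne r 0 with rfl | hr0
    · refine Set.mem_iUnion₂.mpr ⟨↑(Ideal.span {a}), ⟨?_, ?_, ?_⟩, ?_⟩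
      · exact coeIdeal_ne_zero' K (ne_bot_of_mem (Ideal.mem_span_singleton_self a) ha0)
      · refine (FractionalIdeal.coeIdeal_le_coeIdeal K).mpr ?_
        rw [Ideal.span_le, Set.singleton_subset_iff]
        exact le_NId 𝒜 K sf M haM
      · rw [coe_coeIdeal_map]
        exact Submodule.FG.map _ (Submodule.fg_span_singleton a)
      · show algebraMap R K (0 : R) ∈ eStar 𝒜 K sf ↑(Ideal.span {a})
        rw [_root_.map_zero]
        exact zero_mem_eStar 𝒜 K sf _
    · refine Set.mem_iUnion₂.mpr ⟨spanSingleton (nonZeroDivisors R) (algebraMap R K r),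
        ⟨spanSingleton_ne_zero' K (algMap_ne_zero K hr0), ?_, ?_⟩, ?_⟩
      · exact FractionalIdeal.spanSingleton_le_iff_mem.mpr hx
      · rw [FractionalIdeal.coe_spanSingleton]
        exact Submodule.fg_span_singleton _
      · have hB1 : spanSingleton (nonZeroDivisors R) (algebraMap R K r) ≤ 1 :=
          FractionalIdeal.spanSingleton_le_iff_mem.mpr
            ((FractionalIdeal.mem_one_iff _).mpr ⟨r, rfl⟩)
        show algebraMap R K r ∈ eStar 𝒜 K sf (spanSingleton (nonZeroDivisors R) (algebraMap R K r))
        rw [mem_eStar_iff 𝒜 K sf hB1]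
        intro z hz hz1
        have hself : algebraMap R K r ∈ spanSingleton (nonZeroDivisors R) (algebraMap R K r) :=
          (FractionalIdeal.mem_spanSingleton _).mpr ⟨1, one_smul _ _⟩
        have hmem : z * algebraMap R K r ∈ spanSingleton (nonZeroDivisors R) z *
            spanSingleton (nonZeroDivisors R) (algebraMap R K r) := mul_mem_span_mul K hself
        obtain ⟨v, hveq⟩ := (FractionalIdeal.mem_one_iff _).mp (hz1 hmem)
        have hv0 : v ≠ 0 := by
          rintro rfl
          rw [_root_.map_zero] at hveq
          exact mul_ne_zero hz (algMap_ne_zero K hr0) hveq.symm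
        have hCf : Cfrac 𝒜 K (spanSingleton (nonZeroDivisors R) z *
            spanSingleton (nonZeroDivisors R) (algebraMap R K r)) =
            ↑(homC 𝒜 (Ideal.span {v})) := by
          unfold Cfrac
          rw [spanSingleton_mul_spanSingleton, ← hveq, idealOf_spanSingleton]
        rw [hCf]
        have hmem2 : algebraMap R K v ∈ sf.toFun ↑(homC 𝒜 (Ideal.span {v})) :=
          mem_sf_self 𝒜 K sf (homC_ne_bot 𝒜 (ne_bot_of_mem (Ideal.mem_span_singleton_self v) hv0))
            (homC_homogeneous 𝒜 _) (le_homC 𝒜 _ (Ideal.mem_span_singleton_self v))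
        have heq : algebraMap R K r = z⁻¹ * algebraMap R K v := by
          rw [hveq, ← mul_assoc, inv_mul_cancel₀ hz, one_mul]
        rw [heq]
        exact FractionalIdeal.mul_mem_mul
          ((FractionalIdeal.mem_spanSingleton _).mpr ⟨1, one_smul _ _⟩) hmem2

lemma case_one (sf : HomStarOp 𝒜 K) {M : Ideal R} {a : R} {δ : Γ} (haM : a ∈ M)
    (haδ : a ∈ 𝒜 δ) (ha0 : a ≠ 0) (hMtop : M ≠ ⊤)
    (hMstar : finTypeSet K (eStar 𝒜 K sf) (↑M : FractionalIdeal (nonZeroDivisors R) K) =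
      {x : K | x ∈ (↑M : FractionalIdeal (nonZeroDivisors R) K)})
    {C : Ideal R} (hC0 : C ≠ ⊥) (hCfg : C.FG) (hCh : Ideal.IsHomogeneous 𝒜 C)
    (hCle : C ≤ homC 𝒜 M) (h1 : (1 : K) ∈ sf.toFun ↑C) : False := by
  classical
  obtain ⟨t, hts⟩ := hCfg
  have hcov : ∀ u : Finset R, (↑u : Set R) ⊆ (homC 𝒜 M : Set R) →
      ∃ J0 : Ideal R, J0 ≤ M ∧ J0.FG ∧ ∀ g ∈ u, g ∈ homC 𝒜 J0 := by
    intro u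
    induction u using Finset.induction with
    | empty => exact fun _ => ⟨⊥, bot_le, Submodule.fg_bot, by simp⟩
    | @insert g u hgu ih =>
      intro hsub
      obtain ⟨J0, hJ0M, hJ0fg, hJ0mem⟩ := ih
        (subset_trans (by intro y hy; exact Finset.mem_insert_of_mem hy) hsub)
      obtain ⟨Jg, hJgM, hJgfg, hJgmem⟩ := exists_fg_homC 𝒜
        (hsub (Finset.mem_insert_self g u))
      refine ⟨J0 ⊔ Jg, sup_le hJ0M hJgM, Submodule.FG.sup hJ0fg hJgfg, ?_⟩
      intro g' hg'
      rcases Finset.mem_insert.mp hg' with rfl | h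
      · exact homC_mono 𝒜 le_sup_right hJgmem
      · exact homC_mono 𝒜 le_sup_left (hJ0mem g' h)
  obtain ⟨J0, hJ0M, hJ0fg, hJ0mem⟩ := hcov t
    (fun g hg => hCle (by rw [← hts]; exact Ideal.subset_span hg))
  have hCleJ0 : C ≤ homC 𝒜 J0 := by
    rw [← hts]
    exact Ideal.span_le.mpr (fun g hg => hJ0mem g hg)
  set J := J0 ⊔ Ideal.span {a} with hJdef
  obtain ⟨s0, hs0⟩ := hJ0fg
  have hJspan : J = Ideal.span ↑(s0 ∪ {a}) := by
    rw [hJdef, Finset.coe_union, Finset.coe_singleton, Ideal.span_union, hs0]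
  have haJ : a ∈ J := by
    rw [hJdef]
    exact Submodule.mem_sup_right (Ideal.mem_span_singleton_self a)
  have hJM : J ≤ M := by
    rw [hJdef]
    exact sup_le hJ0M (by rw [Ideal.span_le, Set.singleton_subset_iff]; exact haM)
  have hJbot : J ≠ ⊥ := ne_bot_of_mem haJ ha0
  have h1' : (1 : K) ∈ sf.toFun ↑(homC 𝒜 J) :=
    sf_coeIdeal_mono 𝒜 K sf hC0 hCh (homC_ne_bot 𝒜 hJbot) (homC_homogeneous 𝒜 J)
      (le_trans hCleJ0 (homC_mono 𝒜 (le_sup_left : J0 ≤ J))) h1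
  have hE : (1 : K) ∈ eStar 𝒜 K sf ↑J :=
    one_mem_eStar 𝒜 K sf hJspan haJ haδ ha0 h1'
  have hFT : (1 : K) ∈ finTypeSet K (eStar 𝒜 K sf) ↑M := by
    rw [finTypeSet]
    refine Set.mem_iUnion₂.mpr ⟨↑J, ⟨coeIdeal_ne_zero' K hJbot,
      (FractionalIdeal.coeIdeal_le_coeIdeal K).mpr hJM, ?_⟩, hE⟩
    rw [coe_coeIdeal_map]
    exact Submodule.FG.map _ ⟨s0 ∪ {a}, hJspan.symm⟩
  rw [hMstar] at hFT
  obtain ⟨y, hyM, hy1⟩ := (FractionalIdeal.mem_coeIdeal _).mp hFT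
  have hy : y = 1 := IsFractionRing.injective R K (by rw [hy1, _root_.map_one])
  exact hMtop ((Ideal.eq_top_iff_one M).mpr (hy ▸ hyM))

end AuxFinal
/-- every maximal `(e(⋆_f))_f`-ideal of `R` meeting `H` is homogeneous. -/
theorem stmt_10
    {Γ : Type*} [AddCommMonoid Γ] [LinearOrder Γ] [IsOrderedCancelAddMonoid Γ] [DecidableEq Γ]
    {R : Type*} [CommRing R] [IsDomain R]
    (𝒜 : Γ → AddSubgroup R) [GradedRing 𝒜]
    (K : Type*) [Field K] [Algebra R K] [IsFractionRing R K]
    (s sf : HomStarOp 𝒜 K)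
    (hsf : ∀ A : FractionalIdeal (nonZeroDivisors R) K, A ≠ 0 → IsHomFrac 𝒜 K A →
      {x : K | x ∈ sf.toFun A} = homFinTypeSet 𝒜 K s.toFun A)
    (M : Ideal R) (hM0 : M ≠ 0) (hMtop : M ≠ ⊤)
    (hMstar : finTypeSet K (eStar 𝒜 K sf) (↑M : FractionalIdeal (nonZeroDivisors R) K) =
      {x : K | x ∈ (↑M : FractionalIdeal (nonZeroDivisors R) K)})
    (hMmax : ∀ J : Ideal R, J ≠ 0 → J ≠ ⊤ →
      finTypeSet K (eStar 𝒜 K sf) (↑J : FractionalIdeal (nonZeroDivisors R) K) =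
        {x : K | x ∈ (↑J : FractionalIdeal (nonZeroDivisors R) K)} → M ≤ J → M = J)
    (hMH : ∃ a ∈ M, a ≠ 0 ∧ SetLike.IsHomogeneousElem 𝒜 a) :
    homC 𝒜 M = M := by
  classical
  obtain ⟨a, haM, ha0, δ, haδ⟩ := hMH
  by_cases hcase : ∃ C : Ideal R, C ≠ ⊥ ∧ C.FG ∧ Ideal.IsHomogeneous 𝒜 C ∧
      C ≤ homC 𝒜 M ∧ (1 : K) ∈ sf.toFun ↑C
  · obtain ⟨C, hC0, hCfg, hCh, hCle, h1⟩ := hcase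
    exact (case_one 𝒜 K sf haM haδ ha0 hMtop hMstar hC0 hCfg hCh hCle h1).elim
  · have hMN : M ≤ NId 𝒜 K sf M := le_NId 𝒜 K sf M
    have hN0 : NId 𝒜 K sf M ≠ 0 := by
      intro hc
      have hM : M ≤ (0 : Ideal R) := hc ▸ hMN
      exact hM0 (le_antisymm hM bot_le)
    have hNtop : NId 𝒜 K sf M ≠ ⊤ := by
      intro hc
      have h1N : (1 : R) ∈ NId 𝒜 K sf M := by rw [hc]; trivial
      rcases h1N with h | ⟨C, hC0, hCfg, hCh, hCle, hm⟩
      · exact one_ne_zero h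
      · exact hcase ⟨C, hC0, hCfg, hCh, hCle, by rwa [_root_.map_one] at hm⟩
    have heq := hMmax (NId 𝒜 K sf M) hN0 hNtop (NId_closed 𝒜 K sf haM ha0) hMN
    apply le_antisymm
    · calc homC 𝒜 M ≤ NId 𝒜 K sf M := homC_le_NId 𝒜 K sf M
        _ = M := heq.symm
    · exact le_homC 𝒜 M
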